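/- arXiv:2403.17715 — 4 statements merged into one kernel-verified Lean document; each statement's English description precedes it below -/
import Mathlib

section
/- Let T be a tree on n ≥ 2 vertices, v a vertex of T, and λ a real number that is an eigenvalue of both T and T - v. Then there exists a vertex w of T such that m(T - w, λ) = m(T, λ) + 1. -/
open scoped Classical

/-- Multiplicity of `lam` as an eigenvalue of a real symmetric matrix:
dimension of the kernel of `A - lam • 1`. -/
noncomputable def matMult {V : Type*} [Fintype V] [DecidableEq V]
    (A : Matrix V V ℝ) (lam : ℝ) : ℕ :=
  Module.finrank ℝ (LinearMap.ker (Matrix.toLin' (A - lam • (1 : Matrix V V ℝ))))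

/-- Adjacency matrix of a simple graph over ℝ. -/
noncomputable def adjM {V : Type*} [Fintype V] (G : SimpleGraph V) : Matrix V V ℝ :=
  fun i j => if G.Adj i j then 1 else 0

/-- Multiplicity of `lam` as an eigenvalue of the adjacency matrix of `G`. -/
noncomputable def gMult {V : Type*} [Fintype V] (G : SimpleGraph V) (lam : ℝ) : ℕ :=
  matMult (adjM G) lam

/-- Multiplicity of `lam` as an eigenvalue of the induced subgraph of `G` on `s`. -/
noncomputable def sMult {V : Type*} [Fintype V] (G : SimpleGraph V) (s : Set V) (lam : ℝ) : ℕ :=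
  gMult (G.induce s) lam

/-- Degree of a vertex, via the cardinality of its neighbor set. -/
noncomputable def deg {V : Type*} (G : SimpleGraph V) (v : V) : ℕ :=
  (G.neighborSet v).ncard

/-- Number of pendant (degree-1) vertices. -/
noncomputable def pendCount {V : Type*} (G : SimpleGraph V) : ℕ :=
  {v : V | deg G v = 1}.ncard

/-- Number of pendant vertices, with the paper's convention that a
single-vertex graph has `p = 2`. -/
noncomputable def pendCount' {V : Type*} (G : SimpleGraph V) : ℕ :=
  if Nat.card V ≤ 1 then 2 else pendCount G

/-- A graph is (isomorphic to) a path graph. -/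
def IsPathGraph {W : Type*} (H : SimpleGraph W) : Prop :=
  ∃ n : ℕ, Nonempty (H ≃g SimpleGraph.pathGraph n)

/-- The vertex sets (as subsets of `V`) of the connected components of `G - w`. -/
def compSupp {V : Type*} (G : SimpleGraph V) (w : V)
    (c : (G.induce {u | u ≠ w}).ConnectedComponent) : Set V :=
  Subtype.val '' c.supp

section PW

variable {V : Type*} [Fintype V]

lemma matMult_eq {W : Type*} (iF : Fintype W) (iD : DecidableEq W) (A : Matrix W W ℝ) (lam : ℝ) :
    @matMult W iF iD A lam = Module.finrank ℝ
      (LinearMap.ker ((@Matrix.mulVecLin ℝ _ W W iF A)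
        - lam • (LinearMap.id : (W → ℝ) →ₗ[ℝ] (W → ℝ)))) := by
  have hk : LinearMap.ker (@Matrix.toLin' ℝ _ W W iD iF (A - lam • (1 : Matrix W W ℝ))) =
      LinearMap.ker ((@Matrix.mulVecLin ℝ _ W W iF A)
        - lam • (LinearMap.id : (W → ℝ) →ₗ[ℝ] (W → ℝ))) := by
    ext x
    simp [Matrix.toLin'_apply, Matrix.sub_mulVec, Matrix.smul_mulVec, Matrix.one_mulVec,
      Matrix.mulVecLin_apply]
  rw [matMult, hk]

lemma finrank_ker_irrel {W : Type*} (i1 i2 : Fintype W) (A : Matrix W W ℝ) (lam : ℝ) :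
    Module.finrank ℝ (LinearMap.ker ((@Matrix.mulVecLin ℝ _ W W i1 A)
        - lam • (LinearMap.id : (W → ℝ) →ₗ[ℝ] (W → ℝ))))
      = Module.finrank ℝ (LinearMap.ker ((@Matrix.mulVecLin ℝ _ W W i2 A)
        - lam • (LinearMap.id : (W → ℝ) →ₗ[ℝ] (W → ℝ)))) := by
  obtain rfl : i1 = i2 := Subsingleton.elim _ _
  rfl

lemma mem_kerL_iff {W : Type*} [Fintype W] (A : Matrix W W ℝ) (lam : ℝ) (x : W → ℝ) :
    x ∈ LinearMap.ker (A.mulVecLin - lam • (LinearMap.id : (W → ℝ) →ₗ[ℝ] (W → ℝ))) ↔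
      ∀ t, (∑ t', A t t' * x t') = lam * x t := by
  simp [LinearMap.mem_ker, Matrix.mulVecLin_apply, Matrix.mulVec, dotProduct,
    funext_iff, sub_eq_zero]

variable {V : Type*} [Fintype V]

lemma adjM_induce (T : SimpleGraph V) (s : Set V) [Fintype ↥s] (a b : ↥s) :
    adjM (T.induce s) a b = adjM T ↑a ↑b := by
  by_cases h : T.Adj ↑a ↑b <;> simp [adjM, h]

lemma adjM_diag (G : SimpleGraph V) (t : V) : adjM G t t = 0 := by simp [adjM]

lemma adjM_symm (G : SimpleGraph V) (a b : V) : adjM G a b = adjM G b a := by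
  by_cases h : G.Adj a b
  · simp [adjM, h, h.symm]
  · have h2 : ¬ G.Adj b a := fun hh => h hh.symm
    simp [adjM, h, h2]

noncomputable def Ksub (T : SimpleGraph V) (lam : ℝ) (s : Set V) : Submodule ℝ (V → ℝ) where
  carrier := {x | (∀ t, t ∉ s → x t = 0) ∧ ∀ t ∈ s, (∑ t', adjM T t t' * x t') = lam * x t}
  zero_mem' := by simp
  add_mem' := by
    rintro x y ⟨hx0, hx⟩ ⟨hy0, hy⟩
    refine ⟨fun t ht => by simp [hx0 t ht, hy0 t ht], fun t ht => ?_⟩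
    have : (∑ t', adjM T t t' * (x + y) t') =
        (∑ t', adjM T t t' * x t') + ∑ t', adjM T t t' * y t' := by
      rw [← Finset.sum_add_distrib]
      exact Finset.sum_congr rfl fun _ _ => by simp [mul_add]
    rw [this, hx t ht, hy t ht]; simp [mul_add]
  smul_mem' := by
    rintro c x ⟨hx0, hx⟩
    refine ⟨fun t ht => by simp [hx0 t ht], fun t ht => ?_⟩
    have : (∑ t', adjM T t t' * (c • x) t') = c * ∑ t', adjM T t t' * x t' := by
      rw [Finset.mul_sum]
      exact Finset.sum_congr rfl fun _ _ => by simp; ring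
    rw [this, hx t ht]; simp; ring

lemma mem_Ksub {T : SimpleGraph V} {lam : ℝ} {s : Set V} {x : V → ℝ} :
    x ∈ Ksub T lam s ↔ (∀ t, t ∉ s → x t = 0) ∧ ∀ t ∈ s, (∑ t', adjM T t t' * x t') = lam * x t :=
  Iff.rfl

lemma sum_subtype_adj (T : SimpleGraph V) (s : Set V) [Fintype ↥s] (y : V → ℝ)
    (hy : ∀ t, t ∉ s → y t = 0) (t : V) (ht : t ∈ s) :
    (∑ b : ↥s, adjM (T.induce s) ⟨t, ht⟩ b * y ↑b) = ∑ t', adjM T t t' * y t' := by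
  have h1 : (∑ t', adjM T t t' * y t') = ∑ t' ∈ s.toFinset, adjM T t t' * y t' := by
    refine (Finset.sum_subset (Finset.subset_univ _) fun t' _ hns => ?_).symm
    rw [hy t' (by simpa using hns), mul_zero]
  rw [h1, Finset.sum_subtype s.toFinset (fun x => Set.mem_toFinset) (fun t' => adjM T t t' * y t')]
  exact Finset.sum_congr rfl fun b _ => by rw [adjM_induce]

noncomputable def kerEquivKsub (T : SimpleGraph V) (lam : ℝ) (s : Set V) [Fintype ↥s] :
    ↥(LinearMap.ker ((adjM (T.induce s)).mulVecLin
        - lam • (LinearMap.id : (↥s → ℝ) →ₗ[ℝ] (↥s → ℝ)))) ≃ₗ[ℝ] ↥(Ksub T lam s) where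
  toFun x := ⟨fun t => if h : t ∈ s then x.1 ⟨t, h⟩ else 0, by
    refine ⟨fun t ht => dif_neg ht, fun t ht => ?_⟩
    have hx := (mem_kerL_iff _ _ _).mp x.2 ⟨t, ht⟩
    dsimp only
    rw [dif_pos ht, ← sum_subtype_adj T s _ (fun t htn => dif_neg htn) t ht, ← hx]
    exact Finset.sum_congr rfl fun b _ => by rw [dif_pos b.2, Subtype.coe_eta]⟩
  map_add' x y := by
    ext t
    by_cases h : t ∈ s <;> simp [h]
  map_smul' c x := by
    ext t
    by_cases h : t ∈ s <;> simp [h]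
  invFun y := ⟨fun b => y.1 ↑b, by
    refine (mem_kerL_iff _ _ _).mpr fun a => ?_
    have h := y.2.2 ↑a a.2
    rw [← sum_subtype_adj T s y.1 y.2.1 ↑a a.2] at h
    simpa [Subtype.coe_eta] using h⟩
  left_inv x := by
    ext b
    simp [dif_pos b.2]
  right_inv y := by
    ext t
    by_cases h : t ∈ s
    · simp [h]
    · simp [h, y.2.1 t h]

lemma sMult_eq_finrank (T : SimpleGraph V) (lam : ℝ) (s : Set V) :
    sMult T s lam = Module.finrank ℝ (Ksub T lam s) := by
  simp only [sMult, gMult]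
  rw [matMult_eq _ _ _ lam]
  exact Eq.trans (finrank_ker_irrel _ _ _ _) (LinearEquiv.finrank_eq (kerEquivKsub T lam s))

noncomputable def kerEquivKuniv (T : SimpleGraph V) (lam : ℝ) :
    ↥(LinearMap.ker ((adjM T).mulVecLin
        - lam • (LinearMap.id : (V → ℝ) →ₗ[ℝ] (V → ℝ)))) ≃ₗ[ℝ] ↥(Ksub T lam Set.univ) where
  toFun x := ⟨x.1, fun t ht => absurd (Set.mem_univ t) ht,
    fun t _ => (mem_kerL_iff _ _ _).mp x.2 t⟩
  map_add' _ _ := rfl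
  map_smul' _ _ := rfl
  invFun y := ⟨y.1, (mem_kerL_iff _ _ _).mpr fun t => y.2.2 t (Set.mem_univ t)⟩
  left_inv _ := rfl
  right_inv _ := rfl

lemma gMult_eq_finrank (T : SimpleGraph V) (lam : ℝ) :
    gMult T lam = Module.finrank ℝ (Ksub T lam Set.univ) := by
  rw [gMult, matMult_eq _ _ _ lam]
  exact Eq.trans (finrank_ker_irrel _ _ _ _) (LinearEquiv.finrank_eq (kerEquivKuniv T lam))

lemma compSupp_ne {G : SimpleGraph V} {w : V} {c : (G.induce {u | u ≠ w}).ConnectedComponent}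
    {t : V} (ht : t ∈ compSupp G w c) : t ≠ w := by
  obtain ⟨a, _, rfl⟩ := ht
  exact a.2

lemma mem_compSupp {G : SimpleGraph V} {w : V} {c : (G.induce {u | u ≠ w}).ConnectedComponent}
    {t : V} (h : t ≠ w) :
    t ∈ compSupp G w c ↔ (G.induce {u | u ≠ w}).connectedComponentMk ⟨t, h⟩ = c := by
  constructor
  · rintro ⟨a, ha, rfl⟩
    rwa [SimpleGraph.ConnectedComponent.mem_supp_iff] at ha
  · intro hc
    exact ⟨⟨t, h⟩, by rwa [SimpleGraph.ConnectedComponent.mem_supp_iff], rfl⟩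

lemma compSupp_closed {G : SimpleGraph V} {w : V} {c : (G.induce {u | u ≠ w}).ConnectedComponent}
    {t t' : V} (ht : t ∈ compSupp G w c) (hadj : G.Adj t t') (hne : t' ≠ w) :
    t' ∈ compSupp G w c := by
  obtain ⟨a, ha, rfl⟩ := ht
  rw [SimpleGraph.ConnectedComponent.mem_supp_iff] at ha
  rw [mem_compSupp hne, ← ha]
  apply SimpleGraph.ConnectedComponent.sound
  exact (SimpleGraph.Adj.reachable (by exact hadj.symm : (G.induce {u | u ≠ w}).Adj ⟨t', hne⟩ a)).symm.symm

lemma walk_stays {G : SimpleGraph V} {w : V} {s : Set V}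
    (hcl : ∀ t ∈ s, ∀ t', G.Adj t t' → t' ≠ w → t' ∈ s)
    {a b : ↥{u | u ≠ w}} (p : (G.induce {u | u ≠ w}).Walk a b) (ha : ↑a ∈ s) : ↑b ∈ s := by
  induction p with
  | nil => exact ha
  | cons h q ih =>
    rename_i x y z
    exact ih (hcl ↑x ha ↑y (by exact h) y.2)

lemma compSupp_subset {G : SimpleGraph V} {w : V} {s : Set V}
    (hcl : ∀ t ∈ s, ∀ t', G.Adj t t' → t' ≠ w → t' ∈ s)
    {t₀ : V} (h₀ : t₀ ∈ s) (h₀w : t₀ ≠ w) :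
    compSupp G w ((G.induce {u | u ≠ w}).connectedComponentMk ⟨t₀, h₀w⟩) ⊆ s := by
  intro t ht
  have htw := compSupp_ne ht
  rw [mem_compSupp htw] at ht
  obtain ⟨p⟩ := (SimpleGraph.ConnectedComponent.exact ht).symm
  exact walk_stays hcl p h₀

lemma exists_nbr {G : SimpleGraph V} (hconn : G.Preconnected) {w : V}
    {c : (G.induce {u | u ≠ w}).ConnectedComponent} {t : V} (ht : t ∈ compSupp G w c) :
    ∃ r ∈ compSupp G w c, G.Adj w r := by
  have key : ∀ (a b : V) (p : G.Walk a b), a ∈ compSupp G w c → b = w →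
      ∃ r ∈ compSupp G w c, G.Adj w r := by
    intro a b p
    induction p with
    | nil => exact fun hx hxw => absurd hxw (compSupp_ne hx)
    | @cons a m b hadj q ih =>
      intro hx hbw
      by_cases h2 : m = w
      · subst h2; exact ⟨a, hx, hadj.symm⟩
      · exact ih (compSupp_closed hx hadj h2) hbw
  obtain ⟨p⟩ := hconn t w
  exact key t w p ht rfl

lemma uniq_nbr {G : SimpleGraph V} (hT : G.IsTree) {w : V}
    {c : (G.induce {u | u ≠ w}).ConnectedComponent} {r r' : V}
    (hr : r ∈ compSupp G w c) (hr' : r' ∈ compSupp G w c)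
    (har : G.Adj w r) (har' : G.Adj w r') : r = r' := by
  by_contra hne
  have hrw := compSupp_ne hr
  have hrw' := compSupp_ne hr'
  -- reachability inside the component
  have hreach : (G.induce {u | u ≠ w}).Reachable ⟨r, hrw⟩ ⟨r', hrw'⟩ := by
    rw [mem_compSupp hrw] at hr
    rw [mem_compSupp hrw'] at hr'
    exact SimpleGraph.ConnectedComponent.exact (hr.trans hr'.symm)
  classical
  obtain ⟨q0⟩ := hreach
  let q1 := q0.toPath
  let f := (SimpleGraph.Embedding.induce (G := G) {u | u ≠ w}).toHom
  have hinj : Function.Injective ⇑f := Subtype.val_injective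
  let q : G.Walk r r' := q1.1.map f
  have hqpath : q.IsPath := SimpleGraph.Walk.map_isPath_of_injective hinj q1.2
  have hwq : w ∉ q.support := by
    intro hmem
    have hmem' : w ∈ (q1.1.map f).support := hmem
    rw [SimpleGraph.Walk.support_map] at hmem'
    obtain ⟨a, _, ha⟩ := List.mem_map.mp hmem'
    exact a.2 ha
  have hp2 : (SimpleGraph.Walk.cons har q).IsPath :=
    (SimpleGraph.Walk.cons_isPath_iff _ _).mpr ⟨hqpath, hwq⟩
  have hp1 : (SimpleGraph.Walk.cons har' SimpleGraph.Walk.nil).IsPath := by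
    simp [SimpleGraph.Walk.cons_isPath_iff, har'.ne]
  have := hT.2
  rw [SimpleGraph.isAcyclic_iff_path_unique] at this
  have heq := this ⟨_, hp1⟩ ⟨_, hp2⟩
  have hwalk : SimpleGraph.Walk.cons har' SimpleGraph.Walk.nil = SimpleGraph.Walk.cons har q :=
    congrArg Subtype.val heq
  have hlen := congrArg SimpleGraph.Walk.length hwalk
  simp [SimpleGraph.Walk.length_cons] at hlen
  exact hne (SimpleGraph.Walk.eq_of_length_eq_zero (SimpleGraph.Walk.nil_iff_length_eq.mp hlen))


/-- Pointwise truncation. -/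
noncomputable def chi (s : Set V) (x : V → ℝ) : V → ℝ := fun t => if t ∈ s then x t else 0

lemma chi_apply_mem {s : Set V} {x : V → ℝ} {t : V} (h : t ∈ s) : chi s x t = x t := if_pos h

lemma chi_apply_not_mem {s : Set V} {x : V → ℝ} {t : V} (h : t ∉ s) : chi s x t = 0 := if_neg h

lemma sum_adj_congr (T : SimpleGraph V) {f g : V → ℝ} (t : V)
    (h : ∀ t', T.Adj t t' → f t' = g t') :
    ∑ t', adjM T t t' * f t' = ∑ t', adjM T t t' * g t' := by
  refine Finset.sum_congr rfl fun t' _ => ?_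
  by_cases ha : T.Adj t t'
  · rw [h t' ha]
  · simp [adjM, ha]

lemma Ksub_restrict (T : SimpleGraph V) (lam : ℝ) {w : V} {s : Set V}
    (hcl : ∀ t ∈ s, ∀ t', T.Adj t t' → t' ≠ w → t' ∈ s) (hws : w ∉ s)
    {x : V → ℝ} (hx : x ∈ Ksub T lam s) {t₀ : V} (ht₀ : t₀ ∈ s) (hx₀ : x t₀ ≠ 0) :
    ∃ c : (T.induce {u | u ≠ w}).ConnectedComponent,
      compSupp T w c ⊆ s ∧ t₀ ∈ compSupp T w c ∧
      chi (compSupp T w c) x ∈ Ksub T lam (compSupp T w c) := by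
  have ht₀w : t₀ ≠ w := fun h => hws (h ▸ ht₀)
  set c := (T.induce {u | u ≠ w}).connectedComponentMk ⟨t₀, ht₀w⟩ with hc
  set C := compSupp T w c with hC
  have hsub : C ⊆ s := compSupp_subset hcl ht₀ ht₀w
  have ht₀C : t₀ ∈ C := by rw [hC, hc, mem_compSupp ht₀w]
  refine ⟨c, hsub, ht₀C, ?_, ?_⟩
  · exact fun t ht => chi_apply_not_mem ht
  · intro t ht
    have hrow := hx.2 t (hsub ht)
    have hagree : ∀ t', T.Adj t t' → chi C x t' = x t' := by
      intro t' hadj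
      by_cases h' : t' ∈ C
      · exact chi_apply_mem h'
      · rw [chi_apply_not_mem h']
        by_cases hxz : x t' = 0
        · exact hxz.symm
        · have hts : t' ∈ s := by by_contra hn; exact hxz (hx.1 t' hn)
          have htw : t' ≠ w := fun h => hws (h ▸ hts)
          exact absurd (compSupp_closed ht hadj htw) h'
    rw [sum_adj_congr T t hagree, hrow, chi_apply_mem ht]

lemma sum_adj_zero (T : SimpleGraph V) (t : V) {f : V → ℝ}
    (h : ∀ t', T.Adj t t' → f t' = 0) : ∑ t', adjM T t t' * f t' = 0 := by
  rw [sum_adj_congr T t (g := fun _ => (0:ℝ)) h]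
  simp

lemma sum_adj_add (T : SimpleGraph V) (t : V) (f g : V → ℝ) :
    ∑ t', adjM T t t' * (f + g) t' =
      (∑ t', adjM T t t' * f t') + ∑ t', adjM T t t' * g t' := by
  rw [← Finset.sum_add_distrib]
  exact Finset.sum_congr rfl fun _ _ => by simp [mul_add]

lemma sum_adj_smul (T : SimpleGraph V) (t : V) (k : ℝ) (f : V → ℝ) :
    ∑ t', adjM T t t' * (k • f) t' = k * ∑ t', adjM T t t' * f t' := by
  rw [Finset.mul_sum]
  exact Finset.sum_congr rfl fun _ _ => by simp; ring

lemma finrank_aux (T : SimpleGraph V) (hT : T.IsTree) (lam : ℝ) (u : V)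
    (c : (T.induce {x | x ≠ u}).ConnectedComponent)
    (r : V) (hrC : r ∈ compSupp T u c) (har : T.Adj u r)
    (y : V → ℝ) (hyK : y ∈ Ksub T lam (compSupp T u c)) (hyr : y r ≠ 0)
    (hspan : ∀ z ∈ Ksub T lam (compSupp T u c), z = (z r / y r) • y) :
    sMult T {t | t ≠ u} lam = gMult T lam + 1 := by
  classical
  set C := compSupp T u c with hCdef
  set Sc : Set V := {t | t ∉ C ∧ t ≠ u} with hScdef
  have huC : u ∉ C := fun h => compSupp_ne h rfl
  have huSc : u ∉ Sc := fun h => h.2 rfl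
  -- u-row of y
  have hrowu : ∑ t, adjM T u t * y t = y r := by
    rw [Finset.sum_eq_single r]
    · simp [adjM, har]
    · intro b _ hbr
      by_cases hyz : y b = 0
      · simp [hyz]
      · have hbC : b ∈ C := by by_contra hn; exact hyz (hyK.1 b hn)
        by_cases hadj : T.Adj u b
        · exact absurd (uniq_nbr hT hrC hbC har hadj).symm hbr
        · simp [adjM, hadj]
    · simp
  -- every global eigenvector vanishes at u
  have hxu0 : ∀ x ∈ Ksub T lam Set.univ, x u = 0 := by
    intro x hx
    have hS1 : ∑ t, y t * (∑ t', adjM T t t' * x t') = lam * ∑ t, y t * x t := by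
      rw [Finset.mul_sum]
      refine Finset.sum_congr rfl fun t _ => ?_
      rw [hx.2 t (Set.mem_univ t)]; ring
    have hswap : ∑ t, y t * (∑ t', adjM T t t' * x t') =
        ∑ t', (∑ t, adjM T t' t * y t) * x t' := by
      simp_rw [Finset.mul_sum]
      rw [Finset.sum_comm]
      refine Finset.sum_congr rfl fun t' _ => ?_
      rw [Finset.sum_mul]
      refine Finset.sum_congr rfl fun t _ => ?_
      rw [adjM_symm T t t']
      ring
    have hg : ∀ t', (∑ t, adjM T t' t * y t) =
        (if t' ∈ C then lam * y t' else if t' = u then y r else 0) := by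
      intro t'
      by_cases h1 : t' ∈ C
      · rw [if_pos h1]; exact hyK.2 t' h1
      · rw [if_neg h1]
        by_cases h2 : t' = u
        · subst h2; rw [if_pos rfl]; exact hrowu
        · rw [if_neg h2]
          apply Finset.sum_eq_zero
          intro t _
          by_cases hyz : y t = 0
          · simp [hyz]
          · have htC : t ∈ C := by by_contra hn; exact hyz (hyK.1 t hn)
            by_cases hadj : T.Adj t' t
            · exact absurd (compSupp_closed htC hadj.symm h2) h1
            · simp [adjM, hadj]
    have h3 : lam * ∑ t, y t * x t = ∑ t', (if t' ∈ C then lam * y t' else 0) * x t' := by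
      rw [Finset.mul_sum]
      refine Finset.sum_congr rfl fun t _ => ?_
      by_cases h1 : t ∈ C
      · rw [if_pos h1]; ring
      · rw [if_neg h1, hyK.1 t h1]; ring
    have h4 : (∑ t', ((if t' ∈ C then lam * y t' else if t' = u then y r else 0)
          - (if t' ∈ C then lam * y t' else 0)) * x t') = y r * x u := by
      rw [Finset.sum_eq_single u]
      · simp [huC]
      · intro b _ hbu
        by_cases hbC : b ∈ C
        · simp [hbC]
        · simp [hbC, hbu]
      · simp
    have h5 : (∑ t', ((if t' ∈ C then lam * y t' else if t' = u then y r else 0)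
          - (if t' ∈ C then lam * y t' else 0)) * x t')
        = (∑ t', (if t' ∈ C then lam * y t' else if t' = u then y r else 0) * x t')
          - ∑ t', (if t' ∈ C then lam * y t' else 0) * x t' := by
      rw [← Finset.sum_sub_distrib]
      exact Finset.sum_congr rfl fun t _ => by ring
    have e0 : (∑ t', (if t' ∈ C then lam * y t' else if t' = u then y r else 0) * x t')
        = ∑ t', (∑ t, adjM T t' t * y t) * x t' :=
      (Finset.sum_congr rfl fun t' _ => by rw [hg t']).symm
    have : y r * x u = 0 := by
      rw [← h4, h5, e0, ← hswap, hS1, h3, sub_self]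
    exact (mul_eq_zero.mp this).resolve_left hyr
  -- chi lemmas
  have hchiC : ∀ (s : Set V) (x : V → ℝ), x ∈ Ksub T lam s → C ⊆ s → x u = 0 →
      chi C x ∈ Ksub T lam C := by
    intro s x hx hCs hxu
    refine ⟨fun t ht => chi_apply_not_mem ht, fun t ht => ?_⟩
    have hagree : ∀ t', T.Adj t t' → chi C x t' = x t' := by
      intro t' hadj
      by_cases h' : t' ∈ C
      · exact chi_apply_mem h'
      · rw [chi_apply_not_mem h']
        by_cases h2 : t' = u
        · rw [h2, hxu]
        · exact absurd (compSupp_closed ht hadj h2) h'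
    rw [sum_adj_congr T t hagree, hx.2 t (hCs ht), chi_apply_mem ht]
  have hchiS : ∀ (s : Set V) (x : V → ℝ), x ∈ Ksub T lam s → Sc ⊆ s → x u = 0 →
      chi Sc x ∈ Ksub T lam Sc := by
    intro s x hx hSs hxu
    refine ⟨fun t ht => chi_apply_not_mem ht, fun t ht => ?_⟩
    have hagree : ∀ t', T.Adj t t' → chi Sc x t' = x t' := by
      intro t' hadj
      by_cases h' : t' ∈ Sc
      · exact chi_apply_mem h'
      · rw [chi_apply_not_mem h']
        by_cases h2 : t' = u
        · rw [h2, hxu]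
        · have ht'C : t' ∈ C := by by_contra hn; exact h' ⟨hn, h2⟩
          exact absurd (compSupp_closed ht'C hadj.symm ht.2) ht.1
    rw [sum_adj_congr T t hagree, hx.2 t (hSs ht), chi_apply_mem ht]
  have hdecomp : ∀ x : V → ℝ, x u = 0 → x = chi C x + chi Sc x := by
    intro x hxu
    funext t
    by_cases h1 : t ∈ C
    · have h2 : t ∉ Sc := fun hh => hh.1 h1
      simp [chi, h1, h2]
    · by_cases h3 : t = u
      · subst h3
        simp [chi, h1, huSc, hxu]
      · have h4 : t ∈ Sc := ⟨h1, h3⟩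
        simp [chi, h1, h4]
  have hs₁C : C ⊆ {t | t ≠ u} := fun t ht => compSupp_ne ht
  have hs₁S : Sc ⊆ {t | t ≠ u} := fun t ht => ht.2
  have hus₁ : u ∉ {t : V | t ≠ u} := fun h => h rfl
  have hxu₁ : ∀ x ∈ Ksub T lam {t | t ≠ u}, x u = 0 := fun x hx => hx.1 u hus₁
  -- no edges between C and Sc, for rows
  have hzC : ∀ (t : V), t ∈ C → ∀ (f : V → ℝ), (∀ t'', t'' ∉ Sc → f t'' = 0) →
      ∑ t', adjM T t t' * f t' = 0 := by
    intro t ht f hf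
    apply sum_adj_zero
    intro t' hadj
    apply hf
    intro hSc
    exact hSc.1 (compSupp_closed ht hadj hSc.2)
  have hzS : ∀ (t : V), t ∈ Sc → ∀ (f : V → ℝ), (∀ t'', t'' ∉ C → f t'' = 0) →
      ∑ t', adjM T t t' * f t' = 0 := by
    intro t ht f hf
    apply sum_adj_zero
    intro t' hadj
    apply hf
    intro ht'C
    exact ht.1 (compSupp_closed ht'C hadj.symm ht.2)
  -- Iso A : Ksub s₁ ≃ Ksub C × Ksub Sc
  have eqA : Module.finrank ℝ (Ksub T lam {t | t ≠ u}) =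
      Module.finrank ℝ (Ksub T lam C) + Module.finrank ℝ (Ksub T lam Sc) := by
    have hprod : Module.finrank ℝ (↥(Ksub T lam C) × ↥(Ksub T lam Sc)) =
        Module.finrank ℝ (Ksub T lam C) + Module.finrank ℝ (Ksub T lam Sc) :=
      Module.finrank_prod
    rw [← hprod]
    refine LinearEquiv.finrank_eq ?_
    refine
      { toFun := fun x => (⟨chi C x.1, hchiC {t | t ≠ u} x.1 x.2 hs₁C (hxu₁ x.1 x.2)⟩,
                           ⟨chi Sc x.1, hchiS {t | t ≠ u} x.1 x.2 hs₁S (hxu₁ x.1 x.2)⟩),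
        map_add' := fun x z => by
          apply Prod.ext
          · apply Subtype.ext; funext t; by_cases h : t ∈ C <;> simp [chi, h]
          · apply Subtype.ext; funext t; by_cases h : t ∈ Sc <;> simp [chi, h],
        map_smul' := fun k x => by
          apply Prod.ext
          · apply Subtype.ext; funext t; by_cases h : t ∈ C <;> simp [chi, h]
          · apply Subtype.ext; funext t; by_cases h : t ∈ Sc <;> simp [chi, h],
        invFun := fun z => ⟨z.1.1 + z.2.1, by
          obtain ⟨⟨z1, hz1⟩, ⟨z2, hz2⟩⟩ := z
          refine ⟨fun t ht => ?_, fun t ht => ?_⟩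
          · have htu : t = u := by by_contra hh; exact ht hh
            rw [htu]
            simp [hz1.1 u huC, hz2.1 u huSc]
          · rw [sum_adj_add]
            by_cases h1 : t ∈ C
            · rw [hzC t h1 z2 hz2.1, hz1.2 t h1]
              have h0 : z2 t = 0 := hz2.1 t (fun hh => hh.1 h1)
              simp [h0, mul_add]
            · have h2 : t ∈ Sc := ⟨h1, ht⟩
              rw [hzS t h2 z1 hz1.1, hz2.2 t h2]
              have h0 : z1 t = 0 := hz1.1 t h1
              simp [h0, mul_add]⟩,
        left_inv := fun x => Subtype.ext (hdecomp x.1 (hxu₁ x.1 x.2)).symm,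
        right_inv := fun z => by
          obtain ⟨⟨z1, hz1⟩, ⟨z2, hz2⟩⟩ := z
          apply Prod.ext
          · apply Subtype.ext
            funext t
            by_cases h : t ∈ C
            · have : z2 t = 0 := hz2.1 t (fun hh => hh.1 h)
              simp [chi, h, this]
            · simp [chi, h, hz1.1 t h]
          · apply Subtype.ext
            funext t
            by_cases h : t ∈ Sc
            · have : z1 t = 0 := hz1.1 t (fun hh => h.1 hh)
              simp [chi, h, this]
            · simp [chi, h, hz2.1 t h] }
  -- Iso B : Ksub univ ≃ Ksub Sc
  have eqB : Module.finrank ℝ (Ksub T lam Set.univ) = Module.finrank ℝ (Ksub T lam Sc) := by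
    refine LinearEquiv.finrank_eq (LinearEquiv.ofBijective
      ({ toFun := fun x => ⟨chi Sc x.1,
            hchiS Set.univ x.1 x.2 (fun _ _ => Set.mem_univ _) (hxu0 x.1 x.2)⟩,
         map_add' := fun x z => by
           apply Subtype.ext; funext t; by_cases h : t ∈ Sc <;> simp [chi, h],
         map_smul' := fun k x => by
           apply Subtype.ext; funext t; by_cases h : t ∈ Sc <;> simp [chi, h] } :
        ↥(Ksub T lam Set.univ) →ₗ[ℝ] ↥(Ksub T lam Sc)) ⟨?_, ?_⟩)
    · rw [injective_iff_map_eq_zero]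
      intro x hx0
      have hchi0 : chi Sc x.1 = 0 := congrArg Subtype.val hx0
      have hxu := hxu0 x.1 x.2
      have hxC : (x : V → ℝ) = chi C x.1 := by
        have hd := hdecomp x.1 hxu
        rw [hchi0, add_zero] at hd
        exact hd
      have hmem : (x : V → ℝ) ∈ Ksub T lam C := by
        rw [hxC]
        exact hchiC Set.univ x.1 x.2 (fun _ _ => Set.mem_univ _) hxu
      have hx_eq : (x : V → ℝ) = ((x : V → ℝ) r / y r) • y := hspan _ hmem
      set k := (x : V → ℝ) r / y r with hkdef
      have hrow : ∑ t', adjM T u t' * x.1 t' = lam * x.1 u := x.2.2 u (Set.mem_univ u)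
      have e2 : ∑ t', adjM T u t' * x.1 t' = k * ∑ t', adjM T u t' * y t' := by
        rw [Finset.mul_sum]
        refine Finset.sum_congr rfl fun t' _ => ?_
        rw [congrFun hx_eq t']
        simp
        ring
      rw [hrowu] at e2
      have hky : k * y r = 0 := by rw [← e2, hrow, hxu, mul_zero]
      have hxr : (x : V → ℝ) r = 0 := by
        rw [hkdef, div_mul_cancel₀ _ hyr] at hky
        exact hky
      have hk0 : k = 0 := by rw [hkdef, hxr, zero_div]
      apply Subtype.ext
      rw [Submodule.coe_zero, hx_eq, hk0, zero_smul]
    · intro z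
      set σ := ∑ t', adjM T u t' * z.1 t' with hσdef
      set k := -σ / y r with hkdef
      have hky : k * y r = -σ := by rw [hkdef]; exact div_mul_cancel₀ _ hyr
      have hmem : (z.1 + k • y) ∈ Ksub T lam Set.univ := by
        refine ⟨fun t ht => absurd (Set.mem_univ t) ht, fun t _ => ?_⟩
        rw [sum_adj_add, sum_adj_smul]
        by_cases h1 : t ∈ C
        · rw [hzC t h1 z.1 (fun t'' h'' => z.2.1 t'' h''), hyK.2 t h1]
          have hz0 : z.1 t = 0 := z.2.1 t (fun hh => hh.1 h1)
          simp [hz0]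
          ring
        · by_cases h2 : t = u
          · rw [h2, hrowu, hky, ← hσdef]
            have hz0 : z.1 u = 0 := z.2.1 u huSc
            have hy0 : y u = 0 := hyK.1 u huC
            simp [hz0, hy0]
          · have h3 : t ∈ Sc := ⟨h1, h2⟩
            rw [hzS t h3 y hyK.1, z.2.2 t h3]
            have hy0 : y t = 0 := hyK.1 t h1
            simp [hy0]
      refine ⟨⟨z.1 + k • y, hmem⟩, ?_⟩
      apply Subtype.ext
      funext t
      by_cases h : t ∈ Sc
      · have hy0 : y t = 0 := hyK.1 t h.1
        simp [chi, h, hy0]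
      · simp [chi, h, z.2.1 t h]
  -- dimension of Ksub C
  have eqC : Module.finrank ℝ (Ksub T lam C) = 1 := by
    have hy0 : y ≠ 0 := fun h => hyr (by rw [h]; rfl)
    have hKC : Ksub T lam C = Submodule.span ℝ {y} := by
      apply le_antisymm
      · intro z hz
        rw [hspan z hz]
        exact Submodule.smul_mem _ _ (Submodule.mem_span_singleton_self y)
      · rw [Submodule.span_le, Set.singleton_subset_iff]
        exact hyK
    rw [hKC]
    exact finrank_span_singleton hy0
  rw [sMult_eq_finrank, gMult_eq_finrank, eqA, eqB, eqC]
  omega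

end PW

/-- Parter–Wiener, part (i). -/
theorem stmt5 {V : Type*} [Fintype V] (T : SimpleGraph V) (hT : T.IsTree)
    (hcard : 2 ≤ Fintype.card V) (v : V) (lam : ℝ)
    (h1 : 1 ≤ gMult T lam) (h2 : 1 ≤ sMult T {u | u ≠ v} lam) :
    ∃ w : V, sMult T {u | u ≠ w} lam = gMult T lam + 1 := by
  classical
  have hKne : ∃ x ∈ Ksub T lam {u | u ≠ v}, x ≠ 0 := by
    rw [← Submodule.ne_bot_iff]
    intro hbot
    rw [sMult_eq_finrank, hbot, finrank_bot] at h2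
    omega
  obtain ⟨x₀, hx₀K, hx₀ne⟩ := hKne
  obtain ⟨t₀, ht₀⟩ : ∃ t, x₀ t ≠ 0 := by
    by_contra h; push_neg at h; exact hx₀ne (funext h)
  have ht₀v : t₀ ∈ {u : V | u ≠ v} := by
    by_contra h; exact ht₀ (hx₀K.1 t₀ h)
  have hvs : v ∉ {u : V | u ≠ v} := fun h => h rfl
  obtain ⟨c₀, hc₀sub, ht₀C, hchiK⟩ :=
    Ksub_restrict T lam (w := v) (fun t _ t' _ ht' => ht') hvs hx₀K ht₀v ht₀
  have hPex : ∃ n, ∃ (w : V) (c : (T.induce {x | x ≠ w}).ConnectedComponent)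
      (x : V → ℝ), x ∈ Ksub T lam (compSupp T w c) ∧ x ≠ 0 ∧ (compSupp T w c).ncard = n := by
    refine ⟨(compSupp T v c₀).ncard, v, c₀, chi (compSupp T v c₀) x₀, hchiK, ?_, rfl⟩
    intro h
    apply ht₀
    have h' := congrFun h t₀
    rwa [chi_apply_mem ht₀C] at h'
  obtain ⟨u, c, y, hyK, hyne, hncard⟩ := Nat.find_spec hPex
  have hmin := fun m (hm : m < Nat.find hPex) => Nat.find_min hPex hm
  obtain ⟨t₁, ht₁⟩ : ∃ t, y t ≠ 0 := by
    by_contra h; push_neg at h; exact hyne (funext h)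
  have ht₁C : t₁ ∈ compSupp T u c := by by_contra h; exact ht₁ (hyK.1 t₁ h)
  obtain ⟨r, hrC, har⟩ := exists_nbr hT.isConnected.preconnected ht₁C
  have hker : ∀ z, z ∈ Ksub T lam (compSupp T u c) → z r = 0 → z = 0 := by
    intro z hz hzr
    by_contra hzne
    obtain ⟨t₂, ht₂⟩ : ∃ t, z t ≠ 0 := by
      by_contra h; push_neg at h; exact hzne (funext h)
    have ht₂C : t₂ ∈ compSupp T u c \ {r} := by
      refine ⟨?_, ?_⟩
      · by_contra h; exact ht₂ (hz.1 t₂ h)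
      · intro h
        rw [Set.mem_singleton_iff] at h
        rw [h] at ht₂
        exact ht₂ hzr
    have hzmem : z ∈ Ksub T lam (compSupp T u c \ {r}) := by
      refine ⟨fun t ht => ?_, fun t ht => hz.2 t ht.1⟩
      by_cases h1' : t ∈ compSupp T u c
      · have htr : t = r := by
          by_contra h2'
          exact ht ⟨h1', by simpa using h2'⟩
        rw [htr]; exact hzr
      · exact hz.1 t h1'
    have hcl : ∀ t ∈ (compSupp T u c \ {r}), ∀ t', T.Adj t t' → t' ≠ r →
        t' ∈ (compSupp T u c \ {r}) := by
      intro t ht t' hadj ht'r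
      have ht'u : t' ≠ u := by
        intro hh
        have hadj2 : T.Adj u t := by rw [← hh]; exact hadj.symm
        have hrt : r = t := uniq_nbr hT hrC ht.1 har hadj2
        exact ht.2 (Set.mem_singleton_iff.mpr hrt.symm)
      exact ⟨compSupp_closed ht.1 hadj ht'u, by simpa using ht'r⟩
    have hrs : r ∉ compSupp T u c \ {r} := fun h => h.2 rfl
    obtain ⟨c', hc'sub, ht₂C', hchi'⟩ := Ksub_restrict T lam (w := r) hcl hrs hzmem ht₂C ht₂
    have hlt : (compSupp T r c').ncard < Nat.find hPex := by
      calc (compSupp T r c').ncard ≤ (compSupp T u c \ {r}).ncard :=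
            Set.ncard_le_ncard hc'sub (Set.toFinite _)
        _ < (compSupp T u c).ncard :=
            Set.ncard_diff_singleton_lt_of_mem hrC (Set.toFinite _)
        _ = Nat.find hPex := hncard
    refine hmin _ hlt ⟨r, c', chi (compSupp T r c') z, hchi', ?_, rfl⟩
    intro h
    apply ht₂
    have h' := congrFun h t₂
    rwa [chi_apply_mem ht₂C'] at h'
  have hyr : y r ≠ 0 := fun h => hyne (hker y hyK h)
  have hspan : ∀ z ∈ Ksub T lam (compSupp T u c), z = (z r / y r) • y := by
    intro z hz
    have hm : z - (z r / y r) • y ∈ Ksub T lam (compSupp T u c) :=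
      Submodule.sub_mem _ hz (Submodule.smul_mem _ _ hyK)
    have h0 : (z - (z r / y r) • y) r = 0 := by
      show z r - (z r / y r) * y r = 0
      rw [div_mul_cancel₀ _ hyr]
      ring
    have hz0 := hker _ hm h0
    exact (sub_eq_zero.mp hz0)
  exact ⟨u, finrank_aux T hT lam u c r hrC har y hyK hyr hspan⟩
end

section
/- Let T be a tree with a vertex w, and suppose λ is an eigenvalue of T - w. Then m(T - w, λ) = m(T, λ) + 1 if and only if there is a connected component H of T - w such that m(H - v, λ) = m(H, λ) - 1, where v is the unique neighbor of w lying in H. -/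
open scoped Classical

set_option linter.unusedSectionVars false


namespace Stmt7Aux

open Module Matrix Finset

variable {V : Type*} [Fintype V]

/-- Vectors supported on `s` satisfying the eigen-equation at every vertex of `s`. -/
noncomputable def kerS (A : Matrix V V ℝ) (lam : ℝ) (s : Set V) : Submodule ℝ (V → ℝ) where
  carrier := {x | (∀ u, u ∉ s → x u = 0) ∧ ∀ u ∈ s, A.mulVec x u = lam * x u}
  add_mem' := by
    rintro a b ⟨ha1, ha2⟩ ⟨hb1, hb2⟩
    refine ⟨fun u hu => by simp [Pi.add_apply, ha1 u hu, hb1 u hu], fun u hu => ?_⟩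
    rw [Matrix.mulVec_add]
    simp only [Pi.add_apply]
    rw [ha2 u hu, hb2 u hu]; ring
  zero_mem' := ⟨fun u _ => rfl, fun u _ => by simp⟩
  smul_mem' := by
    rintro c x ⟨h1, h2⟩
    refine ⟨fun u hu => by simp [h1 u hu], fun u hu => ?_⟩
    rw [Matrix.mulVec_smul]
    simp only [Pi.smul_apply, smul_eq_mul]
    rw [h2 u hu]; ring

lemma mem_kerS {A : Matrix V V ℝ} {lam : ℝ} {s : Set V} {x : V → ℝ} :
    x ∈ kerS A lam s ↔ (∀ u, u ∉ s → x u = 0) ∧ ∀ u ∈ s, A.mulVec x u = lam * x u :=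
  Iff.rfl

/-- key bilinear symmetry identity -/
lemma sum_mulVec_comm {A : Matrix V V ℝ} (hA : ∀ i j, A i j = A j i) (x y : V → ℝ) :
    ∑ u, A.mulVec x u * y u = ∑ u, A.mulVec y u * x u := by
  simp only [Matrix.mulVec, dotProduct, Finset.sum_mul]
  rw [Finset.sum_comm]
  exact Finset.sum_congr rfl fun i _ => Finset.sum_congr rfl fun j _ => by rw [hA]; ring

/-- If a linear functional is nonzero somewhere on `K`, cutting `K` by it drops
the dimension by exactly one. -/
lemma finrank_eq_succ_of_functional (K Q : Submodule ℝ (V → ℝ)) (f : (V → ℝ) →ₗ[ℝ] ℝ)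
    (hQ : ∀ x, x ∈ Q ↔ x ∈ K ∧ f x = 0)
    (x₀ : V → ℝ) (hx₀K : x₀ ∈ K) (hx₀ : f x₀ ≠ 0) :
    finrank ℝ K = finrank ℝ Q + 1 := by
  have hQ' : Q = K ⊓ LinearMap.ker f := by
    ext x; simp only [Submodule.mem_inf, LinearMap.mem_ker]; exact hQ x
  set g : K →ₗ[ℝ] ℝ := f.comp K.subtype with hg
  have hrange : LinearMap.range g = ⊤ := by
    rw [eq_top_iff]
    intro a _
    refine ⟨(a / f x₀) • ⟨x₀, hx₀K⟩, ?_⟩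
    simp only [hg, _root_.map_smul, LinearMap.comp_apply, Submodule.coe_subtype, smul_eq_mul]
    field_simp
  have h1 := g.finrank_range_add_finrank_ker
  rw [hrange] at h1
  have h2 : finrank ℝ (⊤ : Submodule ℝ ℝ) = 1 := by
    rw [finrank_top]; exact Module.finrank_self ℝ
  have h3 : finrank ℝ (LinearMap.ker g) = finrank ℝ Q := by
    have hker : LinearMap.ker g = Submodule.comap K.subtype (K ⊓ LinearMap.ker f) := by
      rw [hg, LinearMap.ker_comp, Submodule.comap_inf, Submodule.comap_subtype_self, top_inf_eq]
    rw [hker, hQ']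
    exact (Submodule.comapSubtypeEquivOfLe inf_le_left).finrank_eq
  omega

noncomputable def extMap (s : Set V) : (↥s → ℝ) →ₗ[ℝ] (V → ℝ) where
  toFun x := fun u => if h : u ∈ s then x ⟨u, h⟩ else 0
  map_add' x y := by funext u; by_cases h : u ∈ s <;> simp [h]
  map_smul' c x := by funext u; by_cases h : u ∈ s <;> simp [h]

lemma extMap_apply (s : Set V) (x : ↥s → ℝ) (u : V) :
    extMap s x u = if h : u ∈ s then x ⟨u, h⟩ else 0 := rfl

lemma extMap_injective (s : Set V) : Function.Injective (extMap (V := V) s) := by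
  intro x y h
  funext i
  have := congrFun h i.val
  simpa [extMap_apply, i.prop] using this

lemma sum_ext (s : Set V) (g : ↥s → ℝ) (f : V → ℝ)
    (hf : ∀ u (h : u ∈ s), f u = g ⟨u, h⟩) (hf0 : ∀ u ∉ s, f u = 0) :
    ∑ u, f u = ∑ i : ↥s, g i := by
  have h1 : ∑ i : ↥s, g i = ∑ i : ↥s, f i.val := by
    refine Finset.sum_congr rfl fun i _ => ?_
    rw [hf i.val i.prop]
  have h2 : ∑ u ∈ s.toFinset, f u = ∑ i : ↥s, f i.val := by
    rw [Finset.sum_subtype s.toFinset (p := fun x => x ∈ s) (by simp) f]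
  rw [h1, ← h2]
  refine (Finset.sum_subset (Finset.subset_univ _) fun u _ hu => ?_).symm
  exact hf0 u (by simpa using hu)


noncomputable def eigKer {W : Type*} [Fintype W] (B : Matrix W W ℝ) (lam : ℝ) :
    Submodule ℝ (W → ℝ) :=
  LinearMap.ker (B.mulVecLin - lam • LinearMap.id)

lemma mem_eigKer {W : Type*} [Fintype W] {B : Matrix W W ℝ} {lam : ℝ} {x : W → ℝ} :
    x ∈ eigKer B lam ↔ ∀ i, B.mulVec x i = lam * x i := by
  rw [eigKer, LinearMap.mem_ker, LinearMap.sub_apply, LinearMap.smul_apply, LinearMap.id_apply,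
    sub_eq_zero, Matrix.mulVecLin_apply, funext_iff]
  exact forall_congr' fun i => by simp

lemma matMult_eq {W : Type*} [Fintype W] [DecidableEq W] (A : Matrix W W ℝ) (lam : ℝ) :
    matMult A lam = finrank ℝ (eigKer A lam) := by
  unfold matMult
  have hset : LinearMap.ker (Matrix.toLin' (A - lam • (1 : Matrix W W ℝ))) = eigKer A lam := by
    ext x
    rw [mem_eigKer, LinearMap.mem_ker, Matrix.toLin'_apply, funext_iff]
    refine forall_congr' fun i => ?_
    rw [Matrix.sub_mulVec, Matrix.smul_mulVec, Matrix.one_mulVec]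
    simp only [Pi.sub_apply, Pi.smul_apply, smul_eq_mul, Pi.zero_apply, sub_eq_zero]
  rw [hset]

section Graph
variable (T : SimpleGraph V) (lam : ℝ)

lemma adjM_symm : ∀ i j, adjM T i j = adjM T j i := by
  intro i j
  simp only [adjM, SimpleGraph.adj_comm]

lemma mem_kerS_extMap (s : Set V) (x : ↥s → ℝ) :
    extMap s x ∈ kerS (adjM T) lam s ↔
      x ∈ eigKer (adjM (T.induce s)) lam := by
  have hmv : ∀ (u : V) (hu : u ∈ s),
      (adjM T).mulVec (extMap s x) u = (adjM (T.induce s)).mulVec x ⟨u, hu⟩ := by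
    intro u hu
    show ∑ u', adjM T u u' * extMap s x u' = ∑ i : ↥s, adjM (T.induce s) ⟨u, hu⟩ i * x i
    refine sum_ext s _ _ (fun u' hu' => ?_) (fun u' hu' => ?_)
    · have : adjM T u u' = adjM (T.induce s) ⟨u, hu⟩ ⟨u', hu'⟩ := by
        simp [adjM]
      rw [this, extMap_apply, dif_pos hu']
    · rw [extMap_apply, dif_neg hu', mul_zero]
  rw [mem_eigKer, mem_kerS]
  constructor
  · rintro ⟨-, h2⟩ i
    rw [← hmv i.val i.prop, h2 i.val i.prop, extMap_apply, dif_pos i.prop]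
  · intro h
    refine ⟨fun u hu => by rw [extMap_apply, dif_neg hu], fun u hu => ?_⟩
    rw [hmv u hu, h ⟨u, hu⟩, extMap_apply, dif_pos hu]

lemma sMult_eq (s : Set V) : sMult T s lam = finrank ℝ (kerS (adjM T) lam s) := by
  unfold sMult gMult
  rw [@matMult_eq ↥s _ (fun a b => Classical.propDecidable (a = b)) (adjM (T.induce s)) lam]
  have himg : Submodule.map (extMap s)
      (eigKer (adjM (T.induce s)) lam)
      = kerS (adjM T) lam s := by
    apply le_antisymm
    · rintro _ ⟨x, hx, rfl⟩
      exact (mem_kerS_extMap T lam s x).mpr hx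
    · intro y hy
      have hext : extMap s (fun i : ↥s => y i.val) = y := by
        funext u
        by_cases h : u ∈ s
        · rw [extMap_apply, dif_pos h]
        · rw [extMap_apply, dif_neg h, (hy.1 u h).symm]
      exact ⟨fun i : ↥s => y i.val,
        (mem_kerS_extMap T lam s _).mp (by rw [hext]; exact hy), hext⟩
  have := (Submodule.equivMapOfInjective _ (extMap_injective s)
    (eigKer (adjM (T.induce s)) lam)).finrank_eq
  rw [himg] at this
  exact this

lemma gMult_eq : gMult T lam = finrank ℝ (kerS (adjM T) lam Set.univ) := by
  unfold gMult
  rw [matMult_eq]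
  have hset : eigKer (adjM T) lam = kerS (adjM T) lam Set.univ := by
    ext x
    rw [mem_eigKer, mem_kerS]
    exact ⟨fun h => ⟨fun u hu => absurd (Set.mem_univ u) hu, fun u _ => h u⟩,
      fun h u => h.2 u (Set.mem_univ u)⟩
  rw [hset]

section Del
variable (w : V)

lemma mem_compSupp_ne {c} {u : V} (hu : u ∈ compSupp T w c) : u ≠ w := by
  obtain ⟨a, -, rfl⟩ := hu; exact a.prop

lemma mem_compSupp_self (u : V) (hu : u ≠ w) :
    u ∈ compSupp T w ((T.induce {x | x ≠ w}).connectedComponentMk ⟨u, hu⟩) :=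
  ⟨⟨u, hu⟩, rfl, rfl⟩

lemma adj_mem_compSupp {c} {t u : V} (ht : t ∈ compSupp T w c) (hu : u ≠ w) (h : T.Adj t u) :
    u ∈ compSupp T w c := by
  obtain ⟨a, haC, rfl⟩ := ht
  refine ⟨⟨u, hu⟩, ?_, rfl⟩
  rw [SimpleGraph.ConnectedComponent.mem_supp_iff] at haC ⊢
  rw [← haC]
  exact SimpleGraph.ConnectedComponent.sound
    (SimpleGraph.Adj.reachable (by simpa using h.symm))

lemma neighbor_unique (hT : T.IsTree) {c} {v₁ v₂ : V}
    (h₁ : v₁ ∈ compSupp T w c) (h₂ : v₂ ∈ compSupp T w c)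
    (a₁ : T.Adj w v₁) (a₂ : T.Adj w v₂) : v₁ = v₂ := by
  obtain ⟨b₁, hb₁, rfl⟩ := h₁
  obtain ⟨b₂, hb₂, rfl⟩ := h₂
  rw [SimpleGraph.ConnectedComponent.mem_supp_iff] at hb₁ hb₂
  have hreach : (T.induce {u | u ≠ w}).Reachable b₁ b₂ :=
    SimpleGraph.ConnectedComponent.exact (hb₁.trans hb₂.symm)
  obtain ⟨p₀⟩ := hreach
  let q : T.Walk b₁.val b₂.val :=
    p₀.map (SimpleGraph.Embedding.induce {u | u ≠ w}).toHom
  have hwq : w ∉ q.support := by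
    show w ∉ (p₀.map (SimpleGraph.Embedding.induce {u | u ≠ w}).toHom).support
    rw [SimpleGraph.Walk.support_map]
    intro hmem
    obtain ⟨a, -, ha⟩ := List.mem_map.mp hmem
    exact a.prop ha
  have hwqp : w ∉ (q.toPath : T.Walk b₁.val b₂.val).support :=
    fun hw => hwq (q.support_toPath_subset hw)
  have hpath2 : (SimpleGraph.Walk.cons a₁ (q.toPath : T.Walk b₁.val b₂.val)).IsPath :=
    (q.toPath.prop).cons hwqp
  have huniq := SimpleGraph.isAcyclic_iff_path_unique.mp hT.IsAcyclic
    (SimpleGraph.Path.singleton a₂) ⟨SimpleGraph.Walk.cons a₁ (q.toPath : T.Walk b₁.val b₂.val), hpath2⟩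
  have hval := congrArg (fun p : T.Path w b₂.val => (p : T.Walk w b₂.val).support) huniq
  simp only [SimpleGraph.Path.singleton, SimpleGraph.Walk.support_cons,
    SimpleGraph.Walk.support_nil] at hval
  rw [SimpleGraph.Walk.support_eq_cons (q.toPath : T.Walk b₁.val b₂.val)] at hval
  exact (List.cons.injEq _ _ _ _).mp ((List.cons.injEq _ _ _ _).mp hval).2 |>.1.symm

lemma compSupp_subset (c) : compSupp T w c ⊆ {u : V | u ≠ w} :=
  fun _ hu => mem_compSupp_ne T w hu

lemma kerS_comp_le (c) :
    kerS (adjM T) lam (compSupp T w c) ≤ kerS (adjM T) lam {u : V | u ≠ w} := by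
  rintro x ⟨h1, h2⟩
  refine ⟨fun u hu => h1 u (fun hc => hu (compSupp_subset T w c hc)), fun t ht => ?_⟩
  by_cases htc : t ∈ compSupp T w c
  · exact h2 t htc
  · rw [h1 t htc, mul_zero]
    show ∑ u, adjM T t u * x u = 0
    refine Finset.sum_eq_zero fun u _ => ?_
    by_cases hxu : x u = 0
    · rw [hxu, mul_zero]
    · have huc : u ∈ compSupp T w c := by
        by_contra hc; exact hxu (h1 u hc)
      have hna : ¬ T.Adj t u :=
        fun hadj => htc (adj_mem_compSupp T w huc ht hadj.symm)
      simp [adjM, hna]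

lemma restrict_mem_kerS (c) {x : V → ℝ} (hx : x ∈ kerS (adjM T) lam {u : V | u ≠ w}) :
    (fun u => if u ∈ compSupp T w c then x u else 0) ∈ kerS (adjM T) lam (compSupp T w c) := by
  obtain ⟨h1, h2⟩ := hx
  refine ⟨fun u hu => if_neg hu, fun t ht => ?_⟩
  have hsum : (adjM T).mulVec (fun u => if u ∈ compSupp T w c then x u else 0) t
      = (adjM T).mulVec x t := by
    show ∑ u, adjM T t u * _ = ∑ u, adjM T t u * x u
    refine Finset.sum_congr rfl fun u _ => ?_
    by_cases huc : u ∈ compSupp T w c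
    · simp only [if_pos huc]
    · simp only [if_neg huc]
      by_cases huw : u = w
      · rw [huw, h1 w (fun hw => hw rfl)]
      · have hna : ¬ T.Adj t u := fun hadj => huc (adj_mem_compSupp T w ht huw hadj)
        simp [adjM, hna]
  rw [hsum, h2 t (mem_compSupp_ne T w ht)]
  simp [ht]

lemma kerS_le_univ
    (hall : ∀ x ∈ kerS (adjM T) lam {u : V | u ≠ w}, (adjM T).mulVec x w = 0) :
    kerS (adjM T) lam {u : V | u ≠ w} ≤ kerS (adjM T) lam Set.univ := by
  rintro x hx
  obtain ⟨h1, h2⟩ := hx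
  refine ⟨fun u hu => absurd (Set.mem_univ u) hu, fun u _ => ?_⟩
  by_cases huw : u = w
  · rw [huw, hall x ⟨h1, h2⟩, h1 w (fun hw => hw rfl), mul_zero]
  · exact h2 u huw

lemma kerS_le_sdiff (s' : Set V) (v : V)
    (hall : ∀ x ∈ kerS (adjM T) lam s', x v = 0) :
    kerS (adjM T) lam s' ≤ kerS (adjM T) lam (s' \ {v}) := by
  rintro x hx
  obtain ⟨h1, h2⟩ := hx
  refine ⟨fun u hu => ?_, fun u hu => h2 u hu.1⟩
  by_cases hus : u ∈ s'
  · have huv : u = v := by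
      by_contra hne
      exact hu ⟨hus, hne⟩
    rw [huv]
    exact hall x ⟨h1, h2⟩
  · exact h1 u hus

lemma kerS_sdiff_iff (s' : Set V) (v : V)
    (x₀ : V → ℝ) (hx₀ : x₀ ∈ kerS (adjM T) lam s') (hx₀v : x₀ v ≠ 0) (y : V → ℝ) :
    y ∈ kerS (adjM T) lam (s' \ {v}) ↔ y ∈ kerS (adjM T) lam s' ∧ y v = 0 := by
  constructor
  · rintro ⟨h1, h2⟩
    have hyv : y v = 0 := h1 v (fun hm => hm.2 rfl)
    have hmv : (adjM T).mulVec y v = 0 := by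
      have hsym := sum_mulVec_comm (adjM_symm T) x₀ y
      have hL : ∑ u, (adjM T).mulVec x₀ u * y u = ∑ u, lam * (x₀ u * y u) := by
        refine Finset.sum_congr rfl fun u _ => ?_
        by_cases hus : u ∈ s'
        · rw [hx₀.2 u hus]; ring
        · rw [h1 u (fun hm => hus hm.1)]; ring
      have hR : ∑ u ∈ Finset.univ.erase v, (adjM T).mulVec y u * x₀ u + (adjM T).mulVec y v * x₀ v
          = ∑ u, (adjM T).mulVec y u * x₀ u :=
        Finset.sum_erase_add _ _ (Finset.mem_univ v)
      have hR2 : ∑ u ∈ Finset.univ.erase v, (adjM T).mulVec y u * x₀ u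
          = ∑ u ∈ Finset.univ.erase v, lam * (x₀ u * y u) := by
        refine Finset.sum_congr rfl fun u hu => ?_
        have huv : u ≠ v := (Finset.mem_erase.mp hu).1
        by_cases hus : u ∈ s'
        · rw [h2 u ⟨hus, huv⟩]; ring
        · rw [hx₀.1 u hus, h1 u (fun hm => hus hm.1)]; ring
      have hR3 : ∑ u ∈ Finset.univ.erase v, lam * (x₀ u * y u) = ∑ u, lam * (x₀ u * y u) :=
        Finset.sum_erase _ (by rw [hyv]; ring)
      have : (adjM T).mulVec y v * x₀ v = 0 := by
        rw [hL] at hsym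
        rw [hR2, hR3] at hR
        linarith [hsym, hR]
      rcases mul_eq_zero.mp this with h | h
      · exact h
      · exact absurd h hx₀v
    refine ⟨⟨fun u hu => h1 u (fun hm => hu hm.1), fun u hu => ?_⟩, hyv⟩
    by_cases huv : u = v
    · rw [huv, hmv, hyv, mul_zero]
    · exact h2 u ⟨hu, huv⟩
  · rintro ⟨⟨h1, h2⟩, hyv⟩
    refine ⟨fun u hu => ?_, fun u hu => h2 u hu.1⟩
    by_cases hus : u ∈ s'
    · have huv : u = v := by
        by_contra hne
        exact hu ⟨hus, hne⟩
      rw [huv]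
      exact hyv
    · exact h1 u hus

lemma kerS_univ_iff (x₀ : V → ℝ) (hx₀ : x₀ ∈ kerS (adjM T) lam {u : V | u ≠ w})
    (hphi : (adjM T).mulVec x₀ w ≠ 0) (y : V → ℝ) :
    y ∈ kerS (adjM T) lam Set.univ ↔
      y ∈ kerS (adjM T) lam {u : V | u ≠ w} ∧ (adjM T).mulVec y w = 0 := by
  constructor
  · rintro ⟨-, h2⟩
    have hyw : y w = 0 := by
      have hsym := sum_mulVec_comm (adjM_symm T) y x₀
      have hL : ∑ u, (adjM T).mulVec y u * x₀ u = ∑ u, lam * (y u * x₀ u) := by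
        refine Finset.sum_congr rfl fun u _ => ?_
        rw [h2 u (Set.mem_univ u)]; ring
      have hR : ∑ u ∈ Finset.univ.erase w, (adjM T).mulVec x₀ u * y u + (adjM T).mulVec x₀ w * y w
          = ∑ u, (adjM T).mulVec x₀ u * y u :=
        Finset.sum_erase_add _ _ (Finset.mem_univ w)
      have hR2 : ∑ u ∈ Finset.univ.erase w, (adjM T).mulVec x₀ u * y u
          = ∑ u ∈ Finset.univ.erase w, lam * (y u * x₀ u) := by
        refine Finset.sum_congr rfl fun u hu => ?_
        have huw : u ≠ w := (Finset.mem_erase.mp hu).1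
        rw [hx₀.2 u huw]; ring
      have hR3 : ∑ u ∈ Finset.univ.erase w, lam * (y u * x₀ u) = ∑ u, lam * (y u * x₀ u) :=
        Finset.sum_erase _ (by rw [hx₀.1 w (fun hw => hw rfl)]; ring)
      have hzero : (adjM T).mulVec x₀ w * y w = 0 := by
        rw [hR2, hR3] at hR
        linarith [hsym, hL, hR]
      rcases mul_eq_zero.mp hzero with h | h
      · exact absurd h hphi
      · exact h
    refine ⟨⟨fun u hu => ?_, fun u _ => h2 u (Set.mem_univ u)⟩, ?_⟩
    · rw [not_not.mp hu]
      exact hyw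
    · rw [h2 w (Set.mem_univ w), hyw, mul_zero]
  · rintro ⟨⟨h1, h2⟩, hphiy⟩
    refine ⟨fun u hu => absurd (Set.mem_univ u) hu, fun u _ => ?_⟩
    by_cases huw : u = w
    · rw [huw, hphiy, h1 w (fun hw => hw rfl), mul_zero]
    · exact h2 u huw

end Del
end Graph
end Stmt7Aux


open Stmt7Aux Module in
/-- Johnson's lemma (Lemma 2.2). -/
theorem stmt7 {V : Type*} [Fintype V] (T : SimpleGraph V) (hT : T.IsTree)
    (w : V) (lam : ℝ) (h : 1 ≤ sMult T {u | u ≠ w} lam) :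
    sMult T {u | u ≠ w} lam = gMult T lam + 1 ↔
      ∃ c : (T.induce {u | u ≠ w}).ConnectedComponent, ∃ v ∈ compSupp T w c,
        T.Adj w v ∧
        sMult T (compSupp T w c) lam = sMult T (compSupp T w c \ {v}) lam + 1 := by
  classical
  have hsmult := sMult_eq T lam {u : V | u ≠ w}
  have hg := gMult_eq T lam
  constructor
  · intro hEq
    have hex : ∃ x ∈ kerS (adjM T) lam {u : V | u ≠ w}, (adjM T).mulVec x w ≠ 0 := by
      by_contra hno
      push_neg at hno
      have hmono := Submodule.finrank_mono (kerS_le_univ T lam w hno)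
      rw [hsmult, hg] at hEq
      omega
    obtain ⟨x, hx, hphi⟩ := hex
    have hrepr : (adjM T).mulVec x w = ∑ u, adjM T w u * x u := rfl
    rw [hrepr] at hphi
    obtain ⟨u, -, hterm⟩ := Finset.exists_ne_zero_of_sum_ne_zero hphi
    have hadj : T.Adj w u := by
      by_contra hna
      simp [adjM, hna] at hterm
    have hxu : x u ≠ 0 := fun h0 => hterm (by rw [h0, mul_zero])
    have huw : u ≠ w := fun hq => T.loopless.irrefl w (hq ▸ hadj)
    set c := (T.induce {x | x ≠ w}).connectedComponentMk ⟨u, huw⟩ with hc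
    have humem : u ∈ compSupp T w c := mem_compSupp_self T w u huw
    set xc : V → ℝ := fun t => if t ∈ compSupp T w c then x t else 0 with hxc
    have hxcmem : xc ∈ kerS (adjM T) lam (compSupp T w c) := restrict_mem_kerS T lam w c hx
    have hxcu : xc u ≠ 0 := by
      rw [hxc]
      simpa [if_pos humem] using hxu
    refine ⟨c, u, humem, hadj, ?_⟩
    rw [sMult_eq T lam (compSupp T w c), sMult_eq T lam (compSupp T w c \ {u})]
    exact finrank_eq_succ_of_functional _ _ (LinearMap.proj u)
      (fun y => kerS_sdiff_iff T lam (compSupp T w c) u xc hxcmem hxcu y) xc hxcmem hxcu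
  · rintro ⟨c, v, hvc, hadj, hm⟩
    rw [sMult_eq T lam (compSupp T w c), sMult_eq T lam (compSupp T w c \ {v})] at hm
    have hex : ∃ x ∈ kerS (adjM T) lam (compSupp T w c), x v ≠ 0 := by
      by_contra hno
      push_neg at hno
      have hmono := Submodule.finrank_mono (kerS_le_sdiff T lam (compSupp T w c) v hno)
      omega
    obtain ⟨x, hxc, hxv⟩ := hex
    have hxs : x ∈ kerS (adjM T) lam {u : V | u ≠ w} := kerS_comp_le T lam w c hxc
    have hphi : (adjM T).mulVec x w = x v := by
      show ∑ u, adjM T w u * x u = x v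
      rw [Finset.sum_eq_single v]
      · simp [adjM, hadj]
      · intro u _ huv
        by_cases hxu : x u = 0
        · rw [hxu, mul_zero]
        · have huc : u ∈ compSupp T w c := by
            by_contra hcc; exact hxu (hxc.1 u hcc)
          by_cases hadj' : T.Adj w u
          · exact absurd (neighbor_unique T w hT huc hvc hadj' hadj) huv
          · simp [adjM, hadj']
      · intro hv; exact absurd (Finset.mem_univ v) hv
    have hphine : (adjM T).mulVec x w ≠ 0 := by rw [hphi]; exact hxv
    rw [hsmult, hg]
    exact finrank_eq_succ_of_functional _ _
      ((LinearMap.proj w).comp (Matrix.mulVecLin (adjM T)))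
      (fun y => kerS_univ_iff T lam w x hxs hphine y) x hxs hphine
end

section
/- Let T be a tree, w a vertex of degree s ≥ 3 in T such that T - w has components T_1, ..., T_s, each of which is a path with the neighbor of w being an endpoint. Suppose each T_i is a path on n_i vertices with n_i ≡ m (mod m+1), where λ = 2cos(iπ/(m+1)) for coprime i, m+1. Then m(T, λ) = s - 1 = p(T) - 1. -/
open scoped Classical

/-! ### Auxiliary machinery for the spider theorem -/

namespace Spider
open SimpleGraph

variable {W : Type*} [Fintype W]

/-- one-sided adjacency sum -/
noncomputable def gsum (G : SimpleGraph W) (x : W → ℝ) (v : W) : ℝ :=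
  ∑ j, (if G.Adj v j then (1:ℝ) else 0) * x j

lemma gsum_symm (G : SimpleGraph W) (lam : ℝ) (u x : W → ℝ) :
    ∑ v, u v * (gsum G x v - lam * x v) = ∑ v, x v * (gsum G u v - lam * u v) := by
  unfold gsum
  simp only [mul_sub, Finset.mul_sum, Finset.sum_sub_distrib]
  congr 1
  · rw [Finset.sum_comm]
    refine Finset.sum_congr rfl fun v _ => Finset.sum_congr rfl fun j _ => ?_
    rw [G.adj_comm]; ring
  · refine Finset.sum_congr rfl fun v _ => ?_; ring

lemma gsum_smul (G : SimpleGraph W) (t : ℝ) (x : W → ℝ) (v : W) :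
    gsum G (fun j => t * x j) v = t * gsum G x v := by
  unfold gsum; rw [Finset.mul_sum]
  exact Finset.sum_congr rfl fun j _ => by ring

lemma mulVec_eq [DecidableEq W] (G : SimpleGraph W) (lam : ℝ) (x : W → ℝ) (v : W) :
    ((adjM G - lam • (1 : Matrix W W ℝ)).mulVec x) v = gsum G x v - lam * x v := by
  simp only [Matrix.mulVec, dotProduct, Matrix.sub_apply, Matrix.smul_apply,
    Matrix.one_apply, adjM, smul_eq_mul, sub_mul, gsum]
  rw [Finset.sum_sub_distrib]
  congr 1
  rw [Finset.sum_congr rfl (g := fun j => if v = j then lam * x j else 0)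
    (fun j _ => by split_ifs with h <;> simp [h])]
  simp

lemma mem_ker_iff [DecidableEq W] (G : SimpleGraph W) (lam : ℝ) (x : W → ℝ) :
    x ∈ LinearMap.ker (Matrix.toLin' (adjM G - lam • (1 : Matrix W W ℝ))) ↔
      ∀ v, gsum G x v = lam * x v := by
  rw [LinearMap.mem_ker, Matrix.toLin'_apply]
  constructor
  · intro h v
    have := congrFun h v
    rw [mulVec_eq] at this
    simpa [sub_eq_zero] using this
  · intro h
    funext v
    rw [mulVec_eq, h v]
    simp

lemma pathSum_eq (n : ℕ) (x : Fin n → ℝ) (v : Fin n) :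
    gsum (pathGraph n) x v =
      (if h : v.1 + 1 < n then x ⟨v.1+1, h⟩ else 0) +
      (if _ : 0 < v.1 then x ⟨v.1-1, lt_of_le_of_lt (Nat.sub_le _ _) v.2⟩ else 0) := by
  have hv := v.2
  unfold gsum
  rw [Finset.sum_congr rfl (g := fun j => if (pathGraph n).Adj v j then x j else 0)
    (fun j _ => by split_ifs with h <;> simp [h])]
  rw [← Finset.sum_filter]
  by_cases h1 : v.1 + 1 < n <;> by_cases h2 : 0 < v.1
  · have : Finset.univ.filter (fun j => (pathGraph n).Adj v j) =
        {⟨v.1+1, h1⟩, ⟨v.1-1, lt_of_le_of_lt (Nat.sub_le _ _) v.2⟩} := by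
      ext j
      simp only [Finset.mem_filter, Finset.mem_univ, true_and, Finset.mem_insert,
        Finset.mem_singleton, pathGraph_adj, Fin.ext_iff]
      omega
    rw [this, Finset.sum_pair (by simp [Fin.ext_iff]; omega)]
    simp [h1, h2]
  · have : Finset.univ.filter (fun j => (pathGraph n).Adj v j) = {⟨v.1+1, h1⟩} := by
      ext j
      simp only [Finset.mem_filter, Finset.mem_univ, true_and, Finset.mem_singleton,
        pathGraph_adj, Fin.ext_iff]
      omega
    rw [this, Finset.sum_singleton]
    simp [h1, h2]
  · have : Finset.univ.filter (fun j => (pathGraph n).Adj v j) =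
        {⟨v.1-1, lt_of_le_of_lt (Nat.sub_le _ _) v.2⟩} := by
      ext j
      simp only [Finset.mem_filter, Finset.mem_univ, true_and, Finset.mem_singleton,
        pathGraph_adj, Fin.ext_iff]
      omega
    rw [this, Finset.sum_singleton]
    simp [h1, h2]
  · have : Finset.univ.filter (fun j => (pathGraph n).Adj v j) = ∅ := by
      ext j
      simp only [Finset.mem_filter, Finset.mem_univ, true_and, Finset.notMem_empty,
        iff_false, pathGraph_adj]
      omega
    rw [this, Finset.sum_empty]
    simp [h1, h2]

lemma pathDeg (n : ℕ) (v : Fin n) :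
    ((pathGraph n).neighborSet v).ncard =
      (if v.1 + 1 < n then 1 else 0) + (if 0 < v.1 then 1 else 0) := by
  have hv := v.2
  by_cases h1 : v.1 + 1 < n <;> by_cases h2 : 0 < v.1 <;> simp only [h1, h2, if_true, if_false]
  · have : (pathGraph n).neighborSet v =
        {⟨v.1+1, h1⟩, ⟨v.1-1, lt_of_le_of_lt (Nat.sub_le _ _) v.2⟩} := by
      ext j
      simp only [mem_neighborSet, pathGraph_adj, Set.mem_insert_iff, Set.mem_singleton_iff,
        Fin.ext_iff]
      omega
    rw [this, Set.ncard_pair (by simp [Fin.ext_iff]; omega)]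
  · have : (pathGraph n).neighborSet v = {⟨v.1+1, h1⟩} := by
      ext j
      simp only [mem_neighborSet, pathGraph_adj, Set.mem_singleton_iff, Fin.ext_iff]
      omega
    rw [this, Set.ncard_singleton]
  · have : (pathGraph n).neighborSet v = {⟨v.1-1, lt_of_le_of_lt (Nat.sub_le _ _) v.2⟩} := by
      ext j
      simp only [mem_neighborSet, pathGraph_adj, Set.mem_singleton_iff, Fin.ext_iff]
      omega
    rw [this, Set.ncard_singleton]
  · have : (pathGraph n).neighborSet v = ∅ := by
      ext j
      simp only [mem_neighborSet, pathGraph_adj, Set.mem_empty_iff_false, iff_false]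
      omega
    rw [this, Set.ncard_empty]

/-! ### Trigonometric sequence -/

/-- the sine sequence -/
noncomputable def sq (θ : ℝ) (j : ℕ) : ℝ := Real.sin (j * θ)

lemma sq_zero (θ : ℝ) : sq θ 0 = 0 := by simp [sq]

lemma sq_rec (θ : ℝ) (j : ℕ) :
    sq θ (j + 2) = 2 * Real.cos θ * sq θ (j + 1) - sq θ j := by
  have h1 : ((j:ℝ) + 2) * θ = ((j:ℝ) + 1) * θ + θ := by ring
  have h2 : (j:ℝ) * θ = ((j:ℝ) + 1) * θ - θ := by ring
  simp only [sq]
  push_cast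
  rw [h1, h2, Real.sin_add, Real.sin_sub]
  ring

section
variable {i m : ℕ}

lemma theta_pos (hi1 : 1 ≤ i) : 0 < (i : ℝ) * Real.pi / (m + 1) := by
  have : (0:ℝ) < i := by exact_mod_cast hi1
  positivity

lemma theta_lt_pi (him : i ≤ m) : (i : ℝ) * Real.pi / (m + 1) < Real.pi := by
  rw [div_lt_iff₀ (by positivity)]
  have hi : (i : ℝ) < m + 1 := by exact_mod_cast Nat.lt_succ_of_le him
  nlinarith [Real.pi_pos]

lemma sq_one_ne (hi1 : 1 ≤ i) (him : i ≤ m) : sq ((i : ℝ) * Real.pi / (m + 1)) 1 ≠ 0 := by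
  simp only [sq, Nat.cast_one, one_mul]
  exact ne_of_gt (Real.sin_pos_of_pos_of_lt_pi (theta_pos hi1) (theta_lt_pi him))

lemma sq_top (n : ℕ) (hdvd : (m + 1) ∣ (n + 1)) :
    sq ((i : ℝ) * Real.pi / (m + 1)) (n + 1) = 0 := by
  obtain ⟨k, hk⟩ := hdvd
  simp only [sq]
  have hm : ((m:ℝ) + 1) ≠ 0 := by positivity
  have : ((n:ℝ) + 1) * ((i : ℝ) * Real.pi / (m + 1)) = ((k * i : ℕ) : ℝ) * Real.pi := by
    have hn : ((n:ℝ) + 1) = ((m:ℝ) + 1) * k := by exact_mod_cast hk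
    push_cast
    rw [hn]
    field_simp
  push_cast
  rw [this]
  exact Real.sin_nat_mul_pi _

lemma sq_last_ne (hi1 : 1 ≤ i) (him : i ≤ m) (n : ℕ) (hdvd : (m + 1) ∣ (n + 1)) :
    sq ((i : ℝ) * Real.pi / (m + 1)) n ≠ 0 := by
  set θ := (i : ℝ) * Real.pi / (m + 1) with hθ
  obtain ⟨k, hk⟩ := hdvd
  have hm : ((m:ℝ) + 1) ≠ 0 := by positivity
  have hA : ((n:ℝ) + 1) * θ = ((k * i : ℕ) : ℝ) * Real.pi := by
    have hn : ((n:ℝ) + 1) = ((m:ℝ) + 1) * k := by exact_mod_cast hk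
    push_cast
    rw [hθ, hn]
    field_simp
  have hsinA : Real.sin (((n:ℝ) + 1) * θ) = 0 := by rw [hA]; exact Real.sin_nat_mul_pi _
  have hcosA : Real.cos (((n:ℝ) + 1) * θ) ≠ 0 := by
    intro h
    have := Real.sin_sq_add_cos_sq (((n:ℝ) + 1) * θ)
    rw [hsinA, h] at this
    norm_num at this
  have hsub : (n:ℝ) * θ = ((n:ℝ) + 1) * θ - θ := by ring
  simp only [sq]
  rw [hsub, Real.sin_sub, hsinA]
  simp only [zero_mul, zero_sub, neg_ne_zero]
  exact mul_ne_zero hcosA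
    (ne_of_gt (Real.sin_pos_of_pos_of_lt_pi (theta_pos hi1) (theta_lt_pi him)))

end

/-! ### Path eigenvector -/

/-- the path eigenvector -/
noncomputable def uvec (θ : ℝ) (n : ℕ) : Fin n → ℝ := fun j => sq θ (j.1 + 1)

lemma uvec_eigen (θ lam : ℝ) (n : ℕ)
    (hrec : ∀ j, sq θ (j + 2) = lam * sq θ (j + 1) - sq θ j)
    (htop : sq θ (n + 1) = 0) (v : Fin n) :
    gsum (pathGraph n) (uvec θ n) v = lam * uvec θ n v := by
  have hv := v.2
  rw [pathSum_eq]
  simp only [uvec]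
  split_ifs with h1 h2 h2
  · have e1 : v.1 + 1 + 1 = v.1 + 2 := by ring
    have e2 : v.1 - 1 + 1 = v.1 := by omega
    rw [e1, e2, hrec v.1]
    ring
  · have e0 : v.1 = 0 := by omega
    rw [e0]
    rw [show 0 + 1 + 1 = 0 + 2 by rfl, hrec 0, sq_zero]
    ring
  · have e2 : v.1 - 1 + 1 = v.1 := by omega
    rw [e2]
    have := hrec v.1
    rw [show v.1 + 2 = n + 1 by omega, htop] at this
    linarith
  · have e0 : v.1 = 0 := by omega
    have := hrec 0
    rw [sq_zero, show (0:ℕ) + 2 = n + 1 by omega, htop] at this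
    rw [e0]
    linarith

lemma path_unique (θ lam : ℝ) (n : ℕ)
    (hrec : ∀ j, sq θ (j + 2) = lam * sq θ (j + 1) - sq θ j)
    (x : Fin n → ℝ) (hx : ∀ v, gsum (pathGraph n) x v = lam * x v)
    (h0 : 0 < n) : ∀ j (h : j < n), x ⟨j, h⟩ * sq θ 1 = x ⟨0, h0⟩ * sq θ (j + 1) := by
  intro j
  induction j using Nat.strong_induction_on with
  | _ j ih =>
    match j with
    | 0 => intro h; rfl
    | 1 =>
      intro h
      have he := hx ⟨0, h0⟩
      rw [pathSum_eq] at he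
      simp only [show (0:ℕ) + 1 = 1 from rfl] at he
      rw [dif_pos h, dif_neg (by simp)] at he
      have hx1 : x ⟨1, h⟩ = lam * x ⟨0, h0⟩ := by simpa using he
      rw [hx1, show (1:ℕ) + 1 = 0 + 2 by rfl, hrec 0, sq_zero]
      ring
    | (j + 2) =>
      intro h
      have hj1 : j + 1 < n := by omega
      have hj : j < n := by omega
      have he := hx ⟨j + 1, hj1⟩
      rw [pathSum_eq] at he
      rw [dif_pos (show j + 1 + 1 < n by omega), dif_pos (by omega : 0 < j + 1)] at he
      simp only [Nat.add_sub_cancel] at he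
      have ih1 := ih (j + 1) (by omega) hj1
      have ih0 := ih j (by omega) hj
      have : x ⟨j + 2, h⟩ * sq θ 1 = lam * (x ⟨j+1, hj1⟩ * sq θ 1) - x ⟨j, hj⟩ * sq θ 1 := by
        rw [show x ⟨j + 2, h⟩ = lam * x ⟨j+1, hj1⟩ - x ⟨j, hj⟩ by linarith]
        ring
      rw [this, ih1, ih0, hrec (j + 1)]
      ring

/-! ### Transport through induced subgraph isos -/

lemma gsum_induce {V : Type*} [Fintype V] (G : SimpleGraph V) (S : Set V) {W : Type*}
    [Fintype W] (H : SimpleGraph W) (φ : G.induce S ≃g H) (x : V → ℝ) (w : V) (hw : w ∉ S)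
    (v : V) (hv : v ∈ S) (hnb : ∀ j, G.Adj v j → j = w ∨ j ∈ S) :
    gsum G x v = gsum H (fun k => x (φ.symm k).1) (φ ⟨v, hv⟩)
      + (if G.Adj v w then x w else 0) := by
  classical
  unfold gsum
  rw [Finset.sum_congr rfl (g := fun j => if G.Adj v j then x j else 0)
    (fun j _ => by split_ifs with h <;> simp [h])]
  rw [← Finset.sum_subset (Finset.subset_univ (S.toFinset ∪ {w}))
    (fun j _ hj => by
      rw [if_neg]
      intro hadj
      rcases hnb j hadj with h | h
      · exact hj (by simp [h])
      · exact hj (by simp [h]))]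
  rw [Finset.sum_union (by simp [Set.disjoint_singleton_right, hw])]
  congr 1
  · rw [Finset.sum_subtype (p := fun j => j ∈ S) S.toFinset (fun j => by simp)]
    rw [← Equiv.sum_comp φ.symm.toEquiv (fun j : S => if G.Adj v j.1 then x j.1 else 0)]
    refine Finset.sum_congr rfl fun k _ => ?_
    have hadj : G.Adj v ((φ.symm.toEquiv k) : V) ↔ H.Adj (φ ⟨v, hv⟩) k := by
      rw [show G.Adj v ((φ.symm.toEquiv k) : V) ↔ (G.induce S).Adj ⟨v, hv⟩ (φ.symm.toEquiv k)
        from Iff.rfl]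
      rw [← φ.map_adj_iff]
      simp
    rw [show (φ.symm.toEquiv k : V) = (φ.symm k).1 from rfl]
    split_ifs with h1 h2 h2
    · simp
    · exact absurd (hadj.mp h1) h2
    · exact absurd (hadj.mpr h2) h1
    · simp
  · rw [Finset.sum_singleton]

/-! ### Components of `T - w` -/

variable {V : Type*} {T : SimpleGraph V} {w : V}

lemma w_not_mem (c : (T.induce {u | u ≠ w}).ConnectedComponent) : w ∉ compSupp T w c := by
  rintro ⟨⟨u, hu⟩, _, h⟩
  exact hu h

lemma mem_ne (c : (T.induce {u | u ≠ w}).ConnectedComponent) {v : V}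
    (hv : v ∈ compSupp T w c) : v ≠ w := by
  rintro rfl
  exact w_not_mem c hv

lemma mem_cmp {v : V} (hv : v ≠ w) :
    v ∈ compSupp T w ((T.induce {u | u ≠ w}).connectedComponentMk ⟨v, hv⟩) :=
  ⟨⟨v, hv⟩, by rw [ConnectedComponent.mem_supp_iff], rfl⟩

lemma cmp_eq_of_mem {c : (T.induce {u | u ≠ w}).ConnectedComponent} {v : V} (hv : v ≠ w)
    (h : v ∈ compSupp T w c) :
    (T.induce {u | u ≠ w}).connectedComponentMk ⟨v, hv⟩ = c := by
  obtain ⟨⟨v', hv'⟩, hm, hval⟩ := h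
  cases hval
  rwa [ConnectedComponent.mem_supp_iff] at hm

lemma adj_mem_comp {c : (T.induce {u | u ≠ w}).ConnectedComponent} {v j : V}
    (hv : v ∈ compSupp T w c) (hj : j ≠ w) (hadj : T.Adj v j) : j ∈ compSupp T w c := by
  have hvw : v ≠ w := by rintro rfl; exact w_not_mem c hv
  have hadj' : (T.induce {u | u ≠ w}).Adj ⟨v, hvw⟩ ⟨j, hj⟩ := hadj
  have h1 := cmp_eq_of_mem hvw hv
  have h2 : (T.induce {u | u ≠ w}).connectedComponentMk ⟨j, hj⟩
      = (T.induce {u | u ≠ w}).connectedComponentMk ⟨v, hvw⟩ :=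
    ConnectedComponent.sound hadj'.symm.reachable
  rw [← h1, ← h2]
  exact mem_cmp hj

lemma attach_exists_aux (c : (T.induce {u | u ≠ w}).ConnectedComponent) :
    ∀ {v u : V} (_ : T.Walk v u), v ∈ compSupp T w c → u = w →
      ∃ a, a ∈ compSupp T w c ∧ T.Adj w a := by
  intro v u p
  induction p with
  | nil =>
    intro hv hu
    subst hu
    exact absurd hv (w_not_mem c)
  | @cons a b u' hadj p ih =>
    intro hv hu
    by_cases hb : b = w
    · subst hb
      exact ⟨a, hv, hadj.symm⟩
    · exact ih (adj_mem_comp hv hb hadj) hu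

lemma attach_exists (hconn : T.Connected) (c : (T.induce {u | u ≠ w}).ConnectedComponent) :
    ∃ a, a ∈ compSupp T w c ∧ T.Adj w a := by
  obtain ⟨⟨v0, hv0⟩, hc⟩ := c.exists_rep
  have hmem : v0 ∈ compSupp T w c := by rw [← hc]; exact mem_cmp hv0
  obtain ⟨p⟩ := hconn.preconnected v0 w
  exact attach_exists_aux c p hmem rfl

lemma attach_unique (hT : T.IsTree) {c : (T.induce {u | u ≠ w}).ConnectedComponent} {a b : V}
    (ha : a ∈ compSupp T w c) (hb : b ∈ compSupp T w c)
    (h1 : T.Adj w a) (h2 : T.Adj w b) : a = b := by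
  by_contra hne
  have haw : a ≠ w := h1.ne'
  have hbw : b ≠ w := h2.ne'
  have hreach : (T.induce {u | u ≠ w}).Reachable ⟨a, haw⟩ ⟨b, hbw⟩ := by
    have e1 := cmp_eq_of_mem haw ha
    have e2 := cmp_eq_of_mem hbw hb
    exact ConnectedComponent.exact (e1.trans e2.symm)
  obtain ⟨q⟩ := hreach
  let q' : T.Walk a b := q.map (SimpleGraph.Embedding.induce {u | u ≠ w}).toHom
  have hsupp : w ∉ q'.support := by
    intro hmem
    rw [show q'.support = (q.map (SimpleGraph.Embedding.induce {u | u ≠ w}).toHom).support from rfl,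
      SimpleGraph.Walk.support_map] at hmem
    obtain ⟨⟨u, hu⟩, _, hval⟩ := List.mem_map.mp hmem
    exact hu hval
  have hP1 : (q'.toPath : T.Walk a b).IsPath := q'.toPath.2
  have hw1 : w ∉ (q'.toPath : T.Walk a b).support :=
    fun h => hsupp (Walk.support_toPath_subset q' h)
  let P2 : T.Walk a b := Walk.cons h1.symm (Walk.cons h2 Walk.nil)
  have hP2 : P2.IsPath := by
    simp only [P2, Walk.isPath_def, Walk.support_cons, Walk.support_nil]
    simp [List.nodup_cons, hne, haw, hbw.symm]
  have := (hT.existsUnique_path a b).unique hP1 hP2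
  rw [this] at hw1
  simp [P2, Walk.support_cons] at hw1

/-! ### Misc -/

lemma ncard_nbhd_induce (G : SimpleGraph V) (S : Set V) (v : V) (hv : v ∈ S) :
    (G.neighborSet v ∩ S).ncard = ((G.induce S).neighborSet ⟨v, hv⟩).ncard := by
  have himg : Subtype.val '' ((G.induce S).neighborSet ⟨v, hv⟩) = G.neighborSet v ∩ S := by
    ext u
    constructor
    · rintro ⟨⟨u', hu'⟩, hm, rfl⟩
      exact ⟨hm, hu'⟩
    · rintro ⟨h1, h2⟩
      exact ⟨⟨u, h2⟩, h1, rfl⟩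
  rw [← himg, Set.ncard_image_of_injective _ Subtype.val_injective]

lemma ncard_nbhd_iso {V' W' : Type*} {G : SimpleGraph V'} {H : SimpleGraph W'} (φ : G ≃g H)
    (v : V') : (G.neighborSet v).ncard = (H.neighborSet (φ v)).ncard := by
  rw [← Nat.card_coe_set_eq, ← Nat.card_coe_set_eq]
  exact Nat.card_congr (φ.mapNeighborSet v)

lemma ker_functional_finrank {C : Type*} [Fintype C] (α : C → ℝ) (c0 : C) (h0 : α c0 ≠ 0) :
    Module.finrank ℝ (LinearMap.ker
      (∑ c : C, α c • LinearMap.proj (R := ℝ) (φ := fun _ : C => ℝ) c)) + 1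
      = Fintype.card C := by
  set f := ∑ c : C, α c • LinearMap.proj (R := ℝ) (φ := fun _ : C => ℝ) c with hf
  have happ : ∀ y : C → ℝ, f y = ∑ c : C, α c * y c := by
    intro y
    rw [hf]
    simp [LinearMap.sum_apply]
  have hsurj : Function.Surjective f := by
    intro r
    refine ⟨fun c => if c = c0 then r / α c0 else 0, ?_⟩
    rw [happ]
    rw [Finset.sum_eq_single c0]
    · simp only [if_true]; field_simp
    · intro b _ hb; simp [hb]
    · simp
  have := LinearMap.finrank_range_add_finrank_ker f
  rw [LinearMap.range_eq_top.mpr hsurj] at this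
  simp only [finrank_top, Module.finrank_self] at this
  rw [Module.finrank_pi] at this
  omega

end Spider
/-- Base case of Theorem 1.3: a spider whose legs are paths on `nᵢ ≡ m (mod m+1)`
vertices, attached at endpoints, has `m(T, lam) = s - 1 = p(T) - 1`. -/
theorem stmt13 (i m : ℕ) (hi1 : 1 ≤ i) (him : i ≤ m) (hco : Nat.Coprime i (m + 1))
    (lam : ℝ) (hlam : lam = 2 * Real.cos (i * Real.pi / (m + 1)))
    {V : Type*} [Fintype V] (T : SimpleGraph V) (hT : T.IsTree)
    (w : V) (hw : 3 ≤ deg T w) (huniq : ∀ u : V, 3 ≤ deg T u → u = w)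
    (hpaths : ∀ c : (T.induce {u | u ≠ w}).ConnectedComponent,
      ∃ n : ℕ, n ≡ m [MOD m + 1] ∧
        Nonempty (T.induce (compSupp T w c) ≃g SimpleGraph.pathGraph n) ∧
        ∀ v ∈ compSupp T w c, T.Adj w v →
          (T.neighborSet v ∩ compSupp T w c).ncard ≤ 1) :
    gMult T lam + 1 = deg T w ∧ pendCount T = deg T w := by
  classical
  set θ : ℝ := (i : ℝ) * Real.pi / (m + 1) with hθ
  have hrec : ∀ j, Spider.sq θ (j + 2) = lam * Spider.sq θ (j + 1) - Spider.sq θ j := by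
    intro j; rw [hlam]; exact Spider.sq_rec θ j
  have hs1 : Spider.sq θ 1 ≠ 0 := Spider.sq_one_ne hi1 him
  haveI : Fintype ((T.induce {u | u ≠ w}).ConnectedComponent) := Fintype.ofFinite _
  set C := (T.induce {u | u ≠ w}).ConnectedComponent with hCdef
  choose n hn φn hend using hpaths
  have φsel : ∀ c : C, (T.induce (compSupp T w c) ≃g SimpleGraph.pathGraph (n c)) :=
    fun c => (φn c).some
  have hdvd : ∀ c : C, (m + 1) ∣ (n c + 1) := by
    intro c
    have h1 : n c + 1 ≡ m + 1 [MOD m + 1] := (hn c).add_right 1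
    have h2 : m + 1 ≡ 0 [MOD m + 1] := Nat.modEq_zero_iff_dvd.mpr dvd_rfl
    exact Nat.modEq_zero_iff_dvd.mp (h1.trans h2)
  have hnpos : ∀ c : C, 0 < n c := by
    intro c
    have := Nat.le_of_dvd (by omega) (hdvd c)
    omega
  have htop : ∀ c : C, Spider.sq θ (n c + 1) = 0 := fun c => Spider.sq_top _ (hdvd c)
  have hlast : ∀ c : C, Spider.sq θ (n c) ≠ 0 := fun c => Spider.sq_last_ne hi1 him _ (hdvd c)
  choose a ha hadj using fun c : C => Spider.attach_exists hT.isConnected c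
  have hattach : ∀ (c : C) (v : V), v ∈ compSupp T w c → T.Adj w v → v = a c :=
    fun c v hv h => Spider.attach_unique hT hv (ha c) h (hadj c)
  set p : (c : C) → Fin (n c) := fun c => φsel c ⟨a c, ha c⟩ with hpdef
  have hdeg1 : ∀ c : C, ((SimpleGraph.pathGraph (n c)).neighborSet (p c)).ncard ≤ 1 := by
    intro c
    have h := hend c (a c) (ha c) (hadj c)
    rwa [Spider.ncard_nbhd_induce T _ _ (ha c), Spider.ncard_nbhd_iso (φsel c)] at h
  have hpend : ∀ c : C, (p c).1 = 0 ∨ (p c).1 + 1 = n c := by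
    intro c
    have h := hdeg1 c
    rw [Spider.pathDeg] at h
    have := (p c).2
    split_ifs at h <;> omega
  set α : C → ℝ := fun c => Spider.uvec θ (n c) (p c) with hα
  have hαne : ∀ c, α c ≠ 0 := by
    intro c
    rcases hpend c with h | h
    · simpa [hα, Spider.uvec, h] using hs1
    · have h' : (p c).1 + 1 = n c := h
      simpa [hα, Spider.uvec, h'] using hlast c
  have hCne : Nonempty C := by
    have h3 : (T.neighborSet w).ncard ≠ 0 := by unfold deg at hw; omega
    obtain ⟨v, hv⟩ := Set.nonempty_of_ncard_ne_zero h3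
    exact ⟨(T.induce {u | u ≠ w}).connectedComponentMk ⟨v, hv.ne'⟩⟩
  have hainj : Function.Injective a := by
    intro c c' h
    have e1 := Spider.cmp_eq_of_mem (hadj c).ne' (ha c)
    have e2 := Spider.cmp_eq_of_mem (hadj c').ne' (ha c')
    rw [← e1, ← e2]
    exact congrArg _ (Subtype.ext h)
  have hasurj : ∀ v ∈ T.neighborSet w, ∃ c, a c = v := by
    intro v hv
    have hvw : v ≠ w := hv.ne'
    exact ⟨(T.induce {u | u ≠ w}).connectedComponentMk ⟨v, hvw⟩,
      (hattach _ v (Spider.mem_cmp hvw) hv).symm⟩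
  have hcard : Fintype.card C = deg T w := by
    have e : C ≃ (T.neighborSet w : Set V) :=
      Equiv.ofBijective (fun c => ⟨a c, hadj c⟩)
        ⟨fun c c' h => hainj (congrArg Subtype.val h),
         fun jv => (hasurj jv.1 jv.2).imp fun c hc => Subtype.ext hc⟩
    rw [show deg T w = (T.neighborSet w).ncard from rfl, ← Nat.card_coe_set_eq,
      ← Nat.card_congr e, Nat.card_eq_fintype_card]
  have hsum : ∀ x : V → ℝ, Spider.gsum T x w = ∑ c : C, x (a c) := by
    intro x
    unfold Spider.gsum
    rw [Finset.sum_congr rfl (g := fun j => if T.Adj w j then x j else 0)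
      (fun j _ => by split_ifs with h <;> simp [h])]
    rw [← Finset.sum_filter]
    refine (Finset.sum_bij (fun c _ => a c) ?_ ?_ ?_ ?_).symm
    · intro c _
      simp only [Finset.mem_filter, Finset.mem_univ, true_and]
      exact hadj c
    · intro c _ c' _ h
      exact hainj h
    · intro j hj
      simp only [Finset.mem_filter, Finset.mem_univ, true_and] at hj
      obtain ⟨c, hc⟩ := hasurj j hj
      exact ⟨c, Finset.mem_univ c, hc⟩
    · intro c _; rfl
  have hnb : ∀ (c : C) (v : V), v ∈ compSupp T w c →
      ∀ j, T.Adj v j → j = w ∨ j ∈ compSupp T w c := by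
    intro c v hv j hj
    by_cases h : j = w
    · exact Or.inl h
    · exact Or.inr (Spider.adj_mem_comp hv h hj)
  have htrans : ∀ (x : V → ℝ) (c : C) (v : V) (hv : v ∈ compSupp T w c),
      Spider.gsum T x v = Spider.gsum (SimpleGraph.pathGraph (n c))
          (fun k => x ((φsel c).symm k).1) (φsel c ⟨v, hv⟩)
        + (if T.Adj v w then x w else 0) :=
    fun x c v hv => Spider.gsum_induce T _ _ (φsel c) x w (Spider.w_not_mem c) v hv (hnb c v hv)
  have hadj_iff : ∀ (c : C) (v : V) (hv : v ∈ compSupp T w c),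
      (T.Adj v w ↔ φsel c ⟨v, hv⟩ = p c) := by
    intro c v hv
    constructor
    · intro h
      have hva : v = a c := hattach c v hv h.symm
      subst hva
      rfl
    · intro h
      have h2 : (⟨v, hv⟩ : compSupp T w c) = ⟨a c, ha c⟩ := (φsel c).toEquiv.injective h
      have hv' : v = a c := congrArg Subtype.val h2
      rw [hv']
      exact (hadj c).symm
  have hdefect : ∀ (x : V → ℝ), (∀ v, Spider.gsum T x v = lam * x v) →
      ∀ (c : C) (k : Fin (n c)),
      Spider.gsum (SimpleGraph.pathGraph (n c)) (fun k' => x ((φsel c).symm k').1) k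
        = lam * x ((φsel c).symm k).1 - (if k = p c then x w else 0) := by
    intro x hx c k
    have hv := ((φsel c).symm k).2
    have h1 := htrans x c ((φsel c).symm k).1 hv
    have h2 : φsel c ⟨((φsel c).symm k).1, hv⟩ = k := by
      rw [show (⟨((φsel c).symm k).1, hv⟩ : compSupp T w c) = (φsel c).symm k from rfl]
      exact (φsel c).apply_symm_apply k
    rw [h2] at h1
    have h3 := hx ((φsel c).symm k).1
    rw [h1] at h3
    have h4 : T.Adj ((φsel c).symm k).1 w ↔ k = p c := by
      rw [hadj_iff c _ hv, h2]
    split_ifs with h5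
    · rw [if_pos (h4.mpr h5)] at h3; linarith
    · rw [if_neg (fun hh => h5 (h4.mp hh))] at h3; linarith
  have hxw : ∀ x : V → ℝ, (∀ v, Spider.gsum T x v = lam * x v) → x w = 0 := by
    intro x hx
    obtain ⟨c0⟩ := hCne
    have hsym := Spider.gsum_symm (SimpleGraph.pathGraph (n c0)) lam (Spider.uvec θ (n c0))
      (fun k => x ((φsel c0).symm k).1)
    have hrhs : ∑ v, (fun k => x ((φsel c0).symm k).1) v *
        (Spider.gsum (SimpleGraph.pathGraph (n c0)) (Spider.uvec θ (n c0)) v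
          - lam * Spider.uvec θ (n c0) v) = 0 := by
      apply Finset.sum_eq_zero
      intro v _
      rw [Spider.uvec_eigen θ lam (n c0) hrec (htop c0)]
      ring
    rw [hrhs] at hsym
    have hlhs : ∑ v, Spider.uvec θ (n c0) v *
        (Spider.gsum (SimpleGraph.pathGraph (n c0)) (fun k => x ((φsel c0).symm k).1) v
          - lam * (fun k => x ((φsel c0).symm k).1) v)
        = -(α c0 * x w) := by
      rw [Finset.sum_congr rfl
        (g := fun v => if v = p c0 then -(Spider.uvec θ (n c0) v * x w) else 0)
        (fun v _ => by
          rw [hdefect x hx c0 v]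
          split_ifs with h <;> simp [h])]
      rw [Finset.sum_ite_eq' Finset.univ (p c0)
        (fun v => -(Spider.uvec θ (n c0) v * x w))]
      simp [hα]
    rw [hlhs] at hsym
    have hne := hαne c0
    have h0 : α c0 * x w = 0 := by linarith
    rcases mul_eq_zero.mp h0 with h | h
    · exact absurd h hne
    · exact h
  have hstruct : ∀ x : V → ℝ, (∀ v, Spider.gsum T x v = lam * x v) →
      ∀ (c : C) (v : V) (hv : v ∈ compSupp T w c),
      x v * α c = x (a c) * Spider.uvec θ (n c) (φsel c ⟨v, hv⟩) := by
    intro x hx c v hv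
    have hw0 := hxw x hx
    set xc : Fin (n c) → ℝ := fun k' => x ((φsel c).symm k').1 with hxc
    have hfull : ∀ k, Spider.gsum (SimpleGraph.pathGraph (n c)) xc k = lam * xc k := by
      intro k
      rw [hxc, hdefect x hx c k, hw0]
      simp
    have huni := Spider.path_unique θ lam (n c) hrec xc hfull (hnpos c)
    set k : Fin (n c) := φsel c ⟨v, hv⟩ with hk
    have hxcv : xc k = x v := by
      rw [hxc, hk]
      simp only
      rw [(φsel c).symm_apply_apply]
    have hxca : xc (p c) = x (a c) := by
      rw [hxc, hpdef]
      simp only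
      rw [(φsel c).symm_apply_apply]
    have e1 := huni k.1 k.2
    have e2 := huni (p c).1 (p c).2
    rw [show (⟨k.1, k.2⟩ : Fin (n c)) = k from rfl, hxcv] at e1
    rw [show (⟨(p c).1, (p c).2⟩ : Fin (n c)) = p c from rfl, hxca] at e2
    have hαval : α c = Spider.sq θ ((p c).1 + 1) := rfl
    have huval : Spider.uvec θ (n c) k = Spider.sq θ (k.1 + 1) := rfl
    have hgoal : (x v * α c) * Spider.sq θ 1
        = (x (a c) * Spider.uvec θ (n c) k) * Spider.sq θ 1 := by
      rw [hαval, huval]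
      linear_combination Spider.sq θ ((p c).1 + 1) * e1 - Spider.sq θ (k.1 + 1) * e2
    exact mul_right_cancel₀ hs1 hgoal
  -- Part 1: the multiplicity
  have part1 : gMult T lam + 1 = deg T w := by
    have hunfold : gMult T lam = Module.finrank ℝ (LinearMap.ker
        (Matrix.toLin' (adjM T - lam • (1 : Matrix V V ℝ)))) := rfl
    set f : (C → ℝ) →ₗ[ℝ] ℝ :=
      ∑ c : C, α c • LinearMap.proj (R := ℝ) (φ := fun _ : C => ℝ) c with hf
    have hfapp : ∀ y, f y = ∑ c, α c * y c := by
      intro y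
      rw [hf]
      simp [LinearMap.sum_apply]
    set K := LinearMap.ker (Matrix.toLin' (adjM T - lam • (1 : Matrix V V ℝ))) with hK
    have hkiff : ∀ x : V → ℝ, x ∈ K ↔ ∀ v, Spider.gsum T x v = lam * x v :=
      fun x => Spider.mem_ker_iff T lam x
    -- the comparison map
    let Θ : K →ₗ[ℝ] (C → ℝ) := LinearMap.pi
      (fun c => (α c)⁻¹ • ((LinearMap.proj (R := ℝ) (φ := fun _ : V => ℝ) (a c)).comp K.subtype))
    have hΘapp : ∀ (x : K) (c : C), Θ x c = (α c)⁻¹ * x.1 (a c) := fun x c => rfl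
    have hΘinj : Function.Injective Θ := by
      rw [← LinearMap.ker_eq_bot, eq_bot_iff]
      rintro ⟨x, hxK⟩ hx0
      rw [LinearMap.mem_ker] at hx0
      have hx := (hkiff x).mp hxK
      have hzero : ∀ c, x (a c) = 0 := by
        intro c
        have := congrFun hx0 c
        rw [hΘapp] at this
        simpa using  (mul_eq_zero.mp this).resolve_left (inv_ne_zero (hαne c))
      rw [Submodule.mem_bot]
      apply Subtype.ext
      funext v
      show x v = 0
      by_cases hvw : v = w
      · rw [hvw]; exact hxw x hx
      · have hv : v ∈ compSupp T w ((T.induce {u | u ≠ w}).connectedComponentMk ⟨v, hvw⟩) :=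
          Spider.mem_cmp hvw
        have := hstruct x hx _ v hv
        rw [hzero] at this
        simp only [zero_mul] at this
        exact (mul_eq_zero.mp this).resolve_right
          (hαne ((T.induce {u | u ≠ w}).connectedComponentMk ⟨v, hvw⟩))
    have hΘrange : LinearMap.range Θ = LinearMap.ker f := by
      apply le_antisymm
      · rintro _ ⟨x, rfl⟩
        rw [LinearMap.mem_ker, hfapp]
        have hx := (hkiff x.1).mp x.2
        have hterm : ∀ c : C, α c * (Θ x c) = x.1 (a c) := by
          intro c
          rw [hΘapp, ← mul_assoc, mul_inv_cancel₀ (hαne c), one_mul]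
        rw [Finset.sum_congr rfl (fun c _ => hterm c)]
        have h0 := hx w
        rw [hsum x.1, hxw x.1 hx] at h0
        simpa using h0
      · intro y hy
        set x : V → ℝ := fun v => if h : v = w then 0 else
          (y ((T.induce {u | u ≠ w}).connectedComponentMk ⟨v, h⟩)) *
            Spider.uvec θ (n ((T.induce {u | u ≠ w}).connectedComponentMk ⟨v, h⟩))
              (φsel ((T.induce {u | u ≠ w}).connectedComponentMk ⟨v, h⟩)
                ⟨v, Spider.mem_cmp h⟩) with hxdef
        have hxw0 : x w = 0 := by simp [hxdef]
        have hxval : ∀ (c : C) (v : V) (hv : v ∈ compSupp T w c),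
            x v = y c * Spider.uvec θ (n c) (φsel c ⟨v, hv⟩) := by
          intro c v hv
          have hvw : v ≠ w := fun h => Spider.w_not_mem c (h ▸ hv)
          have hc := Spider.cmp_eq_of_mem hvw hv
          subst hc
          rw [hxdef]
          simp only
          rw [dif_neg hvw]
        have hxker : ∀ v, Spider.gsum T x v = lam * x v := by
          intro v
          by_cases hvw : v = w
          · subst hvw
            rw [hsum x, hxw0]
            rw [Finset.sum_congr rfl (fun c _ => hxval c (a c) (ha c))]
            have hterm : ∀ c : C, y c * Spider.uvec θ (n c) (φsel c ⟨a c, ha c⟩)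
                = α c * y c := by
              intro c
              rw [hα]
              simp only
              rw [hpdef]
              ring
            rw [Finset.sum_congr rfl (fun c _ => hterm c)]
            rw [← hfapp y, LinearMap.mem_ker.mp hy]
            ring
          · have hv : v ∈ compSupp T w
                ((T.induce {u | u ≠ w}).connectedComponentMk ⟨v, hvw⟩) := Spider.mem_cmp hvw
            set c := (T.induce {u | u ≠ w}).connectedComponentMk ⟨v, hvw⟩ with hc
            rw [htrans x c v hv]
            have hxc : (fun k => x ((φsel c).symm k).1)
                = fun k => y c * Spider.uvec θ (n c) k := by
              funext k
              rw [hxval c _ ((φsel c).symm k).2]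
              congr 1
              rw [show (⟨((φsel c).symm k).1, ((φsel c).symm k).2⟩ : compSupp T w c)
                = (φsel c).symm k from rfl]
              rw [(φsel c).apply_symm_apply]
            rw [hxc, Spider.gsum_smul, Spider.uvec_eigen θ lam (n c) hrec (htop c)]
            rw [hxval c v hv, hxw0, ite_self]
            ring
        have hxK : x ∈ K := (hkiff x).mpr hxker
        refine ⟨⟨x, hxK⟩, ?_⟩
        funext c
        rw [hΘapp]
        show (α c)⁻¹ * x (a c) = y c
        rw [hxval c (a c) (ha c)]
        have huv : Spider.uvec θ (n c) (φsel c ⟨a c, ha c⟩) = α c := rfl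
        rw [huv, mul_comm (y c), ← mul_assoc, inv_mul_cancel₀ (hαne c), one_mul]
    have hfin : Module.finrank ℝ K = Module.finrank ℝ (LinearMap.ker f) := by
      rw [← hΘrange]
      exact (LinearMap.finrank_range_of_inj hΘinj).symm
    obtain ⟨c0⟩ := hCne
    have hkf := Spider.ker_functional_finrank α c0 (hαne c0)
    rw [hunfold, ← hK, hfin, ← hf] at *
    rw [← hcard]
    exact hkf
  -- Part 2: pendant vertices
  have hdeg_formula : ∀ (c : C) (v : V) (hv : v ∈ compSupp T w c),
      deg T v = ((SimpleGraph.pathGraph (n c)).neighborSet (φsel c ⟨v, hv⟩)).ncard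
        + (if v = a c then 1 else 0) := by
    intro c v hv
    have hsplit : T.neighborSet v
        = (T.neighborSet v ∩ compSupp T w c) ∪ (T.neighborSet v ∩ {w}) := by
      ext j
      constructor
      · intro hj
        rcases hnb c v hv j hj with h | h
        · exact Or.inr ⟨hj, by simp [h]⟩
        · exact Or.inl ⟨hj, h⟩
      · rintro (⟨h, _⟩ | ⟨h, _⟩) <;> exact h
    have hdisj : Disjoint (T.neighborSet v ∩ compSupp T w c) (T.neighborSet v ∩ {w}) := by
      rw [Set.disjoint_left]
      rintro j ⟨_, hj1⟩ ⟨_, hj2⟩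
      rw [Set.mem_singleton_iff] at hj2
      subst hj2
      exact Spider.w_not_mem c hj1
    rw [show deg T v = (T.neighborSet v).ncard from rfl, hsplit,
      Set.ncard_union_eq hdisj (Set.toFinite _) (Set.toFinite _)]
    congr 1
    · rw [Spider.ncard_nbhd_induce T _ v hv, Spider.ncard_nbhd_iso (φsel c)]
    · by_cases hva : v = a c
      · rw [if_pos hva]
        have heq : T.neighborSet v ∩ {w} = {w} := by
          ext j
          simp only [Set.mem_inter_iff, Set.mem_singleton_iff, SimpleGraph.mem_neighborSet]
          constructor
          · rintro ⟨_, h⟩; exact h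
          · rintro rfl
            subst hva
            exact ⟨(hadj c).symm, rfl⟩
        rw [heq, Set.ncard_singleton]
      · rw [if_neg hva]
        have heq : T.neighborSet v ∩ {w} = ∅ := by
          ext j
          simp only [Set.mem_inter_iff, Set.mem_singleton_iff, Set.mem_empty_iff_false,
            iff_false, SimpleGraph.mem_neighborSet, not_and]
          intro h1 h2
          subst h2
          exact hva (hattach c v hv h1.symm)
        rw [heq, Set.ncard_empty]
  -- the far endpoint of each leg
  have hqex : ∀ c : C, ∃ q : Fin (n c), ((q.1 = 0 ∨ q.1 + 1 = n c) ∧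
      (n c = 1 → q = p c) ∧ (2 ≤ n c → q ≠ p c)) := by
    intro c
    rcases hpend c with h | h
    · refine ⟨⟨n c - 1, by have := hnpos c; omega⟩, ?_, ?_, ?_⟩
      · right; have := hnpos c; simp; omega
      · intro h1
        apply Fin.ext
        simp [h1, h]
      · intro h2 hcon
        have := congrArg Fin.val hcon
        simp [h] at this
        omega
    · refine ⟨⟨0, hnpos c⟩, ?_, ?_, ?_⟩
      · left; rfl
      · intro h1
        apply Fin.ext
        simp
        omega
      · intro h2 hcon
        have := congrArg Fin.val hcon
        simp at this
        omega
  choose q hq1 hq2 hq3 using hqex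
  set b : C → V := fun c => ((φsel c).symm (q c)).1 with hbdef
  have hbmem : ∀ c, b c ∈ compSupp T w c := fun c => ((φsel c).symm (q c)).2
  have hφb : ∀ c, φsel c ⟨b c, hbmem c⟩ = q c := by
    intro c
    rw [show (⟨b c, hbmem c⟩ : compSupp T w c) = (φsel c).symm (q c) from rfl]
    exact (φsel c).apply_symm_apply (q c)
  have hba_iff : ∀ c, b c = a c ↔ q c = p c := by
    intro c
    constructor
    · intro h
      have : (⟨b c, hbmem c⟩ : compSupp T w c) = ⟨a c, ha c⟩ := Subtype.ext h
      rw [← hφb c, this, hpdef]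
    · intro h
      have : ((φsel c).symm (q c)) = ((φsel c).symm (p c)) := by rw [h]
      rw [hbdef]
      simp only
      rw [this, hpdef, (φsel c).symm_apply_apply]
  have hb_pend : ∀ c, deg T (b c) = 1 := by
    intro c
    rw [hdeg_formula c (b c) (hbmem c), hφb c, Spider.pathDeg]
    by_cases h1 : n c = 1
    · have hq := hq2 c h1
      have hba : b c = a c := (hba_iff c).mpr hq
      rw [if_pos hba]
      have : (q c).1 = 0 := by have := (q c).2; omega
      simp [this, h1]
    · have h2 : 2 ≤ n c := by have := hnpos c; omega
      have hqp : q c ≠ p c := hq3 c h2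
      have hba : b c ≠ a c := fun h => hqp ((hba_iff c).mp h)
      rw [if_neg hba]
      rcases hq1 c with h | h
      · simp [h]; omega
      · have hv2 := (q c).2
        have e1 : ¬ ((q c).1 + 1 < n c) := by omega
        have e2 : 0 < (q c).1 := by
          -- if q c = 0 and p c is endpoint... need q ≠ p and q endpoint
          rcases hpend c with hp | hp
          · -- p = 0; q + 1 = n c; if q = 0 then n c = 1 contradiction
            omega
          · -- p + 1 = n c and q + 1 = n c → q = p contradiction
            exfalso
            exact hqp (Fin.ext (by omega))
        simp [e1, e2]
  have hpend_unique : ∀ (c : C) (v : V) (hv : v ∈ compSupp T w c), deg T v = 1 → v = b c := by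
    intro c v hv hdv
    rw [hdeg_formula c v hv, Spider.pathDeg] at hdv
    set k : Fin (n c) := φsel c ⟨v, hv⟩ with hk
    have hva_iff : v = a c ↔ k = p c := by
      constructor
      · intro h
        have hse : (⟨v, hv⟩ : compSupp T w c) = ⟨a c, ha c⟩ := Subtype.ext h
        rw [hk, hse]
      · intro h
        have h2 : (⟨v, hv⟩ : compSupp T w c) = ⟨a c, ha c⟩ :=
          (φsel c).injective (by rw [← hk, h])
        exact congrArg Subtype.val h2
    have hkv := k.2
    by_cases hva : v = a c
    · rw [if_pos hva] at hdv
      have hn1 : n c = 1 := by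
        have hkp : k = p c := hva_iff.mp hva
        split_ifs at hdv <;> omega
      have : b c = a c := (hba_iff c).mpr (hq2 c hn1)
      rw [hva, ← this]
    · rw [if_neg hva] at hdv
      have hkp : k ≠ p c := fun h => hva (hva_iff.mpr h)
      have h2 : 2 ≤ n c := by
        by_contra hcon
        have hn1 : n c = 1 := by have := hnpos c; omega
        exact hkp (Fin.ext (by have := (p c).2; omega))
      -- k is an endpoint distinct from p c, hence k = q c
      have hkq : k = q c := by
        have hkend : k.1 = 0 ∨ k.1 + 1 = n c := by
          split_ifs at hdv with e1 e2 e2 <;> omega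
        have hpc := hpend c
        have hq1c := hq1 c
        have hqp := hq3 c h2
        apply Fin.ext
        rcases hkend with hk0 | hkn
        · rcases hq1c with hq0 | hqn
          · rw [hk0, hq0]
          · -- q + 1 = n; k = 0; need p ≠ 0... p must be at n-1? k ≠ p
            rcases hpc with hp0 | hpn
            · exfalso; exact hkp (Fin.ext (by omega))
            · exfalso; exact hqp (Fin.ext (by omega))
        · rcases hq1c with hq0 | hqn
          · rcases hpc with hp0 | hpn
            · exfalso; exact hqp (Fin.ext (by omega))
            · exfalso; exact hkp (Fin.ext (by omega))
          · omega
      have h3 : (⟨v, hv⟩ : compSupp T w c) = (φsel c).symm (q c) :=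
        (φsel c).injective (by
          rw [← hk, hkq, (φsel c).apply_symm_apply])
      exact congrArg Subtype.val h3
  have part2 : pendCount T = deg T w := by
    have hwnp : deg T w ≠ 1 := by omega
    have e : C ≃ {v : V | deg T v = 1} := by
      refine Equiv.ofBijective (fun c => ⟨b c, hb_pend c⟩) ⟨?_, ?_⟩
      · intro c c' h
        have hval : b c = b c' := congrArg Subtype.val h
        have e1 := Spider.cmp_eq_of_mem (Spider.mem_ne c (hbmem c)) (hbmem c)
        have e2 := Spider.cmp_eq_of_mem (Spider.mem_ne c' (hbmem c')) (hbmem c')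
        rw [← e1, ← e2]
        exact congrArg _ (Subtype.ext hval)
      · rintro ⟨v, hv⟩
        simp only [Set.mem_setOf_eq] at hv
        have hvw : v ≠ w := fun h => hwnp (h ▸ hv)
        refine ⟨(T.induce {u | u ≠ w}).connectedComponentMk ⟨v, hvw⟩, ?_⟩
        apply Subtype.ext
        exact (hpend_unique _ v (Spider.mem_cmp hvw) hv).symm
    rw [show pendCount T = {v : V | deg T v = 1}.ncard from rfl, ← Nat.card_coe_set_eq,
      ← Nat.card_congr e, Nat.card_eq_fintype_card, hcard]
  exact ⟨part1, part2⟩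
end

section
/- Let T be a tree with exactly one major vertex w of degree s ≥ 4, such that T - w consists of path components T_1, ..., T_s with the neighbor u_i of w in T_i an endpoint of T_i. Let λ = 2cos(iπ/(m+1)) with i, m+1 coprime, 1 ≤ i ≤ m. Suppose m(T_1, λ) = 0 and m(T_j, λ) = 1 with m(T_j - u_j, λ) = 0 for j = 2, ..., s. Then m(T, λ) = s - 2 = p(T) - 2. -/
open scoped Classical

set_option maxHeartbeats 1000000

lemma sum_subtype_of_zero_off {V : Type*} [Fintype V] {S : Set V} (f : V → ℝ)
    (hf : ∀ v ∉ S, f v = 0) : ∑ v, f v = ∑ v : S, f ↑v := by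
  classical
  rw [← Finset.sum_subtype S.toFinset (by simp) f]
  exact (Finset.sum_subset (Finset.subset_univ _)
    (fun x _ hx => hf x (by simpa using hx))).symm

lemma mem_eigKer_iff {W : Type*} [Fintype W] [DecidableEq W] (G : SimpleGraph W) (lam : ℝ) (x : W → ℝ) :
    x ∈ LinearMap.ker (Matrix.toLin' (adjM G - lam • (1 : Matrix W W ℝ))) ↔
      ∀ v, (∑ u, if G.Adj v u then x u else 0) = lam * x v := by
  classical
  simp only [LinearMap.mem_ker, Matrix.toLin'_apply, funext_iff, Pi.zero_apply,
    Matrix.mulVec, dotProduct, Matrix.sub_apply, Matrix.smul_apply, Matrix.one_apply,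
    adjM, sub_mul, Finset.sum_sub_distrib, ite_mul, one_mul, zero_mul, smul_eq_mul, mul_ite,
    mul_one, mul_zero, Finset.sum_ite_eq, Finset.mem_univ, if_true, sub_eq_zero]


section ES
variable {V : Type*} [Fintype V] (T : SimpleGraph V) (lam : ℝ)

noncomputable def ES (S : Set V) : Submodule ℝ (V → ℝ) where
  carrier := {x | (∀ v, v ∉ S → x v = 0) ∧
    ∀ v ∈ S, (∑ u, if T.Adj v u ∧ u ∈ S then x u else 0) = lam * x v}
  add_mem' := by
    rintro x y ⟨hx0, hx⟩ ⟨hy0, hy⟩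
    refine ⟨fun v hv => by simp [hx0 v hv, hy0 v hv], fun v hv => ?_⟩
    have h1 : ∀ u ∈ Finset.univ, (if T.Adj v u ∧ u ∈ S then (x + y) u else 0)
        = (if T.Adj v u ∧ u ∈ S then x u else 0) + (if T.Adj v u ∧ u ∈ S then y u else 0) := by
      intro u _; by_cases h : T.Adj v u ∧ u ∈ S <;> simp [h]
    rw [Finset.sum_congr rfl h1, Finset.sum_add_distrib, hx v hv, hy v hv, Pi.add_apply]
    ring
  zero_mem' := ⟨fun v _ => rfl, fun v _ => by simp⟩
  smul_mem' := by
    rintro c x ⟨hx0, hx⟩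
    refine ⟨fun v hv => by simp [hx0 v hv], fun v hv => ?_⟩
    have h1 : ∀ u ∈ Finset.univ, (if T.Adj v u ∧ u ∈ S then (c • x) u else 0)
        = c * (if T.Adj v u ∧ u ∈ S then x u else 0) := by
      intro u _; by_cases h : T.Adj v u ∧ u ∈ S <;> simp [h]
    rw [Finset.sum_congr rfl h1, ← Finset.mul_sum, hx v hv, Pi.smul_apply, smul_eq_mul]
    ring

lemma mem_ES {S : Set V} {x : V → ℝ} :
    x ∈ ES T lam S ↔ (∀ v, v ∉ S → x v = 0) ∧
      ∀ v ∈ S, (∑ u, if T.Adj v u ∧ u ∈ S then x u else 0) = lam * x v := Iff.rfl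

lemma sMult_eq_finrank_ES (S : Set V) : sMult T S lam = Module.finrank ℝ (ES T lam S) := by
  classical
  unfold sMult gMult matMult
  letI : DecidableEq ↥S := fun a b => Classical.propDecidable (a = b)
  let Φ : (S → ℝ) →ₗ[ℝ] (V → ℝ) :=
    { toFun := fun x v => if h : v ∈ S then x ⟨v, h⟩ else 0
      map_add' := by intro x y; ext v; by_cases h : v ∈ S <;> simp [h]
      map_smul' := by intro c x; ext v; by_cases h : v ∈ S <;> simp [h] }
  have hΦinj : Function.Injective Φ := by
    intro x y h
    ext ⟨v, hv⟩
    have := congrFun h v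
    simpa [Φ, hv] using this
  have key : ∀ (x : S → ℝ) (v : V) (hv : v ∈ S),
      (∑ u, if T.Adj v u ∧ u ∈ S then (Φ x) u else 0)
        = ∑ u : S, if (T.induce S).Adj ⟨v, hv⟩ u then x u else 0 := by
    intro x v hv
    rw [sum_subtype_of_zero_off _ (fun u hu => if_neg (fun h => hu h.2))]
    refine Finset.sum_congr rfl fun u _ => ?_
    simp [Φ, u.2, SimpleGraph.comap_adj]
  have hmap : (LinearMap.ker (Matrix.toLin'
      (adjM (T.induce S) - lam • (1 : Matrix S S ℝ)))).map Φ = ES T lam S := by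
    ext y
    simp only [Submodule.mem_map]
    constructor
    · rintro ⟨x, hx, rfl⟩
      replace hx := (mem_eigKer_iff _ lam _).mp hx
      refine ⟨fun v hv => by simp [Φ, hv], fun v hv => ?_⟩
      rw [key x v hv]; convert hx ⟨v, hv⟩ using 2
      all_goals simp [Φ, hv]
    · rintro ⟨hy0, hy⟩
      refine ⟨fun u => y ↑u, ?_, ?_⟩
      · refine (mem_eigKer_iff _ lam _).mpr ?_
        rintro ⟨v, hv⟩
        have h2 := hy v hv
        rw [sum_subtype_of_zero_off _ (fun u hu => if_neg (fun h => hu h.2))] at h2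
        refine Eq.trans (Finset.sum_congr rfl fun u _ => ?_) h2
        simp [u.2]
      · ext v
        by_cases h : v ∈ S
        · simp [Φ, h]
        · simp [Φ, h, hy0 v h]
  rw [← hmap]
  exact (LinearEquiv.finrank_eq (Submodule.equivMapOfInjective Φ hΦinj
    (LinearMap.ker (Matrix.toLin' (adjM (T.induce S) - lam • (1 : Matrix S S ℝ))))))

end ES

section More
variable {V : Type*} [Fintype V] (T : SimpleGraph V) (lam : ℝ)

lemma gMult_eq_finrank_ES : gMult T lam = Module.finrank ℝ (ES T lam Set.univ) := by
  unfold gMult matMult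
  letI : DecidableEq V := fun a b => Classical.propDecidable (a = b)
  have h : LinearMap.ker (Matrix.toLin' (adjM T - lam • (1 : Matrix V V ℝ)))
      = ES T lam Set.univ := by
    ext x
    rw [mem_eigKer_iff, mem_ES]
    simp
  rw [h]

variable (w : V)

lemma compSupp_subset_s14 (c : (T.induce {u | u ≠ w}).ConnectedComponent) :
    compSupp T w c ⊆ {u | u ≠ w} := by
  rintro v ⟨⟨u, hu⟩, _, rfl⟩; exact hu

lemma mem_compSupp_self {v : V} (hv : v ≠ w) :
    v ∈ compSupp T w ((T.induce {u | u ≠ w}).connectedComponentMk ⟨v, hv⟩) :=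
  ⟨⟨v, hv⟩, by rw [SimpleGraph.ConnectedComponent.mem_supp_iff], rfl⟩

lemma mem_compSupp_iff {v : V} (hv : v ≠ w) (c : (T.induce {u | u ≠ w}).ConnectedComponent) :
    v ∈ compSupp T w c ↔ (T.induce {u | u ≠ w}).connectedComponentMk ⟨v, hv⟩ = c := by
  constructor
  · rintro ⟨⟨u, hu⟩, hmem, h⟩
    cases h
    rwa [SimpleGraph.ConnectedComponent.mem_supp_iff] at hmem
  · rintro rfl; exact mem_compSupp_self T w hv

lemma compSupp_closed_s14 {c : (T.induce {u | u ≠ w}).ConnectedComponent} {v u : V}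
    (hv : v ∈ compSupp T w c) (hadj : T.Adj v u) (hu : u ≠ w) : u ∈ compSupp T w c := by
  have hvw : v ≠ w := compSupp_subset_s14 T w c hv
  rw [mem_compSupp_iff T w hvw] at hv
  rw [mem_compSupp_iff T w hu, ← hv]
  exact (SimpleGraph.ConnectedComponent.sound
    (SimpleGraph.Adj.reachable (by simpa using hadj.symm : (T.induce {u | u ≠ w}).Adj ⟨u, hu⟩ ⟨v, hvw⟩)))

lemma compSupp_disjoint {c c' : (T.induce {u | u ≠ w}).ConnectedComponent} (h : c ≠ c')
    {v : V} (hv : v ∈ compSupp T w c) (hv' : v ∈ compSupp T w c') : False := by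
  have hvw : v ≠ w := compSupp_subset_s14 T w c hv
  rw [mem_compSupp_iff T w hvw] at hv hv'
  exact h (hv ▸ hv'.symm ▸ rfl)

lemma ES_mono_closed {S' S : Set V} (hss : S' ⊆ S)
    (hcl : ∀ v ∈ S', ∀ u ∈ S, T.Adj v u → u ∈ S') : ES T lam S' ≤ ES T lam S := by
  rintro x ⟨hx0, hx⟩
  refine ⟨fun v hv => hx0 v (fun h => hv (hss h)), fun v hv => ?_⟩
  by_cases hv' : v ∈ S'
  · rw [← hx v hv']
    refine Finset.sum_congr rfl fun u _ => ?_
    by_cases ha : T.Adj v u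
    · by_cases hu' : u ∈ S'
      · simp [ha, hu', hss hu']
      · by_cases hu : u ∈ S
        · simp [ha, hu, hu', hx0 u hu']
        · simp [ha, hu, hu']
    · simp [ha]
  · rw [hx0 v hv', mul_zero]
    refine Finset.sum_eq_zero fun u _ => ?_
    by_cases ha : T.Adj v u ∧ u ∈ S
    · rw [if_pos ha]
      by_cases hu' : u ∈ S'
      · exact absurd (hcl u hu' v hv ha.1.symm) hv'
      · exact hx0 u hu'
    · rw [if_neg ha]

end More

section Decomp
variable {V : Type*} [Fintype V] (T : SimpleGraph V) (lam : ℝ)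

lemma finrank_ES_partition {ι : Type*} [Fintype ι] (S : Set V) (P : ι → Set V)
    (hsub : ∀ i, P i ⊆ S)
    (hcl : ∀ i, ∀ v ∈ P i, ∀ u ∈ S, T.Adj v u → u ∈ P i)
    (hdisj : ∀ i j, i ≠ j → ∀ v, v ∈ P i → v ∈ P j → False)
    (hcover : ∀ v ∈ S, ∃ i, v ∈ P i) :
    Module.finrank ℝ (ES T lam S) = ∑ i, Module.finrank ℝ (ES T lam (P i)) := by
  have mempf : ∀ (x : ES T lam S) (i : ι),
      (fun v => if v ∈ P i then (x : V → ℝ) v else 0) ∈ ES T lam (P i) := by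
    rintro ⟨x, hx0, hx⟩ i
    refine ⟨fun v hv => if_neg hv, fun v hv => ?_⟩
    simp only
    rw [if_pos hv]
    have hvS : v ∈ S := hsub i hv
    rw [← hx v hvS]
    refine Finset.sum_congr rfl fun u _ => ?_
    by_cases ha : T.Adj v u
    · by_cases hu : u ∈ P i
      · simp [ha, hu, hsub i hu]
      · have h2 : ¬ (u ∈ S) := fun huS => hu (hcl i v hv u huS ha)
        simp [ha, hu, h2]
    · simp [ha]
  let Ψ : ES T lam S →ₗ[ℝ] (∀ i, ES T lam (P i)) :=
    { toFun := fun x i => ⟨fun v => if v ∈ P i then (x : V → ℝ) v else 0, mempf x i⟩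
      map_add' := by
        intro x y; funext i; apply Subtype.ext; funext v
        by_cases h : v ∈ P i <;> simp [h]
      map_smul' := by
        intro a x; funext i; apply Subtype.ext; funext v
        by_cases h : v ∈ P i <;> simp [h] }
  have hinj : Function.Injective Ψ := by
    intro x y h
    apply Subtype.ext; funext v
    by_cases hv : v ∈ S
    · obtain ⟨i, hi⟩ := hcover v hv
      have := congrFun (congrArg Subtype.val (congrFun h i)) v
      simpa [Ψ, hi] using this
    · rw [x.2.1 v hv, y.2.1 v hv]
  have hsurj : Function.Surjective Ψ := by
    intro y
    have hx : (fun v => ∑ i, ((y i : V → ℝ) v)) ∈ ES T lam S := by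
      refine ⟨fun v hv => Finset.sum_eq_zero fun i _ => (y i).2.1 v
        (fun hc => hv (hsub i hc)), fun v hv => ?_⟩
      obtain ⟨i₀, hvi₀⟩ := hcover v hv
      have hzero : ∀ i, i ≠ i₀ → ∀ u, T.Adj v u → u ∈ S → (y i : V → ℝ) u = 0 := by
        intro i hi u hadj huS
        by_cases hu : u ∈ P i
        · exact absurd (hdisj i i₀ hi v (hcl i u hu v hv hadj.symm) hvi₀) (fun h => h)
        · exact (y i).2.1 u hu
      have hsplit : ∀ u, (if T.Adj v u ∧ u ∈ S then ∑ i, (y i : V → ℝ) u else 0)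
          = ∑ i, (if T.Adj v u ∧ u ∈ S then (y i : V → ℝ) u else 0) := by
        intro u; by_cases h : T.Adj v u ∧ u ∈ S <;> simp [h]
      beta_reduce
      rw [Finset.sum_congr rfl fun u _ => hsplit u, Finset.sum_comm]
      have hother : ∀ i ∈ Finset.univ, i ≠ i₀ →
          (∑ u, if T.Adj v u ∧ u ∈ S then (y i : V → ℝ) u else 0) = 0 := by
        intro i _ hi
        refine Finset.sum_eq_zero fun u _ => ?_
        by_cases h : T.Adj v u ∧ u ∈ S
        · rw [if_pos h]; exact hzero i hi u h.1 h.2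
        · rw [if_neg h]
      rw [Finset.sum_eq_single_of_mem i₀ (Finset.mem_univ _) hother]
      have hi₀eq : (∑ u, if T.Adj v u ∧ u ∈ S then (y i₀ : V → ℝ) u else 0)
          = ∑ u, if T.Adj v u ∧ u ∈ P i₀ then (y i₀ : V → ℝ) u else 0 := by
        refine Finset.sum_congr rfl fun u _ => ?_
        by_cases ha : T.Adj v u
        · by_cases hu : u ∈ P i₀
          · simp [ha, hu, hsub i₀ hu]
          · by_cases huS : u ∈ S
            · simp [ha, hu, huS, (y i₀).2.1 u hu]
            · simp [ha, hu, huS]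
        · simp [ha]
      rw [hi₀eq, (y i₀).2.2 v hvi₀]
      congr 1
      have h3 : ∀ i ∈ Finset.univ, i ≠ i₀ → (y i : V → ℝ) v = 0 := by
        intro i _ hi
        by_cases hu : v ∈ P i
        · exact absurd (hdisj i i₀ hi v hu hvi₀) (fun h => h)
        · exact (y i).2.1 v hu
      rw [Finset.sum_eq_single_of_mem i₀ (Finset.mem_univ _) h3]
    refine ⟨⟨fun v => ∑ i, ((y i : V → ℝ) v), hx⟩, ?_⟩
    funext i; apply Subtype.ext; funext v
    show (if v ∈ P i then ∑ i', ((y i' : V → ℝ) v) else 0) = (y i : V → ℝ) v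
    by_cases hv : v ∈ P i
    · rw [if_pos hv]
      have h3 : ∀ i' ∈ Finset.univ, i' ≠ i → (y i' : V → ℝ) v = 0 := by
        intro i' _ hi'
        by_cases hu : v ∈ P i'
        · exact absurd (hdisj i' i hi' v hu hv) (fun h => h)
        · exact (y i').2.1 v hu
      rw [Finset.sum_eq_single_of_mem i (Finset.mem_univ _) h3]
    · rw [if_neg hv, ((y i).2.1 v hv)]
  calc Module.finrank ℝ (ES T lam S)
      = Module.finrank ℝ (∀ i, ES T lam (P i)) :=
        LinearEquiv.finrank_eq (LinearEquiv.ofBijective Ψ ⟨hinj, hsurj⟩)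
    _ = _ := Module.finrank_pi_fintype ℝ

lemma finrank_ES_decomp (w : V) [Fintype (T.induce {u | u ≠ w}).ConnectedComponent] :
    Module.finrank ℝ (ES T lam {u | u ≠ w})
      = ∑ c : (T.induce {u | u ≠ w}).ConnectedComponent,
          Module.finrank ℝ (ES T lam (compSupp T w c)) := by
  refine finrank_ES_partition T lam _ _ (compSupp_subset_s14 T w)
    (fun c v hv u hu ha => compSupp_closed_s14 T w hv ha hu)
    (fun c c' h v hv hv' => compSupp_disjoint T w h hv hv')
    (fun v hv => ⟨_, mem_compSupp_self T w hv⟩)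

end Decomp

section Delete
variable {V : Type*} [Fintype V] (T : SimpleGraph V) (lam : ℝ)

/-- The linear functional summing values over the neighbors of `w`. -/
noncomputable def nbrSum (w : V) : (V → ℝ) →ₗ[ℝ] ℝ where
  toFun := fun y => ∑ v, if T.Adj w v then y v else 0
  map_add' := by
    intro x y
    rw [← Finset.sum_add_distrib]
    refine Finset.sum_congr rfl fun v _ => ?_
    by_cases h : T.Adj w v <;> simp [h]
  map_smul' := by
    intro c x
    simp only [RingHom.id_apply, smul_eq_mul]
    rw [Finset.mul_sum]
    refine Finset.sum_congr rfl fun v _ => ?_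
    by_cases h : T.Adj w v <;> simp [h]

lemma eigvec_zero_at_w (w : V) (S : Set V) (hw : w ∉ S) (hS : ∀ v : V, v ≠ w → v ∈ S)
    (y : V → ℝ) (hy : y ∈ ES T lam S) (hfy : nbrSum T w y ≠ 0)
    (x : V → ℝ) (hx : x ∈ ES T lam Set.univ) : x w = 0 := by
  obtain ⟨hy0, hyeq⟩ := hy
  obtain ⟨-, hxeq⟩ := hx
  have hxeq' : ∀ v, (∑ u, if T.Adj v u then x u else 0) = lam * x v := by
    intro v
    refine Eq.trans (Finset.sum_congr rfl fun u _ => ?_) (hxeq v (Set.mem_univ v))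
    by_cases h : T.Adj v u <;> simp [h]
  have hxrow : ∀ v, (∑ u, if T.Adj v u ∧ u ∈ S then x u else 0)
      = lam * x v - (if T.Adj v w then 1 else 0) * x w := by
    intro v
    have h3 : (∑ u, if T.Adj v u ∧ u = w then x u else 0)
        = (if T.Adj v w then 1 else 0) * x w := by
      rw [Finset.sum_eq_single w]
      · by_cases h : T.Adj v w <;> simp [h]
      · intro b _ hb; rw [if_neg (fun h => hb h.2)]
      · intro h; exact absurd (Finset.mem_univ w) h
    have h2 : (∑ u, if T.Adj v u then x u else 0)
        = (∑ u, if T.Adj v u ∧ u ∈ S then x u else 0)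
          + ∑ u, if T.Adj v u ∧ u = w then x u else 0 := by
      rw [← Finset.sum_add_distrib]
      refine Finset.sum_congr rfl fun u _ => ?_
      by_cases ha : T.Adj v u
      · by_cases hu : u ∈ S
        · have hne : u ≠ w := fun h => hw (h ▸ hu)
          simp [ha, hu, hne]
        · have huw : u = w := by by_contra h; exact hu (hS u h)
          subst huw; simp [ha, hw]
      · simp [ha]
    have h1 := hxeq' v
    rw [h2, h3] at h1
    linarith
  -- P = Q computation
  set P := ∑ v, y v * (∑ u, if T.Adj v u ∧ v ∈ S ∧ u ∈ S then x u else 0) with hP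
  set Q := ∑ v, x v * (∑ u, if T.Adj v u ∧ v ∈ S ∧ u ∈ S then y u else 0) with hQ
  have hPQ : P = Q := by
    rw [hP, hQ]
    have hform : ∀ (a b : V → ℝ), (∑ v, a v * (∑ u, if T.Adj v u ∧ v ∈ S ∧ u ∈ S then b u else 0))
        = ∑ v, ∑ u, a v * (if T.Adj v u ∧ v ∈ S ∧ u ∈ S then b u else 0) := by
      intro a b
      exact Finset.sum_congr rfl fun v _ => Finset.mul_sum _ _ _
    rw [hform y x, hform x y, Finset.sum_comm]
    refine Finset.sum_congr rfl fun v _ => Finset.sum_congr rfl fun u _ => ?_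
    by_cases h : T.Adj v u ∧ v ∈ S ∧ u ∈ S
    · have h' : T.Adj u v ∧ u ∈ S ∧ v ∈ S := ⟨h.1.symm, h.2.2, h.2.1⟩
      rw [if_pos h, if_pos h']
      ring
    · have h' : ¬ (T.Adj u v ∧ u ∈ S ∧ v ∈ S) := fun hc => h ⟨hc.1.symm, hc.2.2, hc.2.1⟩
      rw [if_neg h, if_neg h']
      ring
  have hPeval : P = lam * (∑ v, y v * x v) - x w * nbrSum T w y := by
    rw [hP]
    have hterm : ∀ v, y v * (∑ u, if T.Adj v u ∧ v ∈ S ∧ u ∈ S then x u else 0)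
        = lam * (y v * x v) - x w * (if T.Adj w v then y v else 0) := by
      intro v
      by_cases hv : v ∈ S
      · have h4 : (∑ u, if T.Adj v u ∧ v ∈ S ∧ u ∈ S then x u else 0)
            = ∑ u, if T.Adj v u ∧ u ∈ S then x u else 0 := by
          refine Finset.sum_congr rfl fun u _ => ?_
          by_cases h : T.Adj v u ∧ u ∈ S
          · rw [if_pos h, if_pos ⟨h.1, hv, h.2⟩]
          · rw [if_neg h, if_neg (fun hc => h ⟨hc.1, hc.2.2⟩)]
        rw [h4, hxrow v]
        have : (if T.Adj w v then y v else 0) = (if T.Adj v w then 1 else 0) * y v := by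
          rw [T.adj_comm w v]
          by_cases h : T.Adj v w <;> simp [h]
        rw [this]
        ring
      · have hvw : v = w := by by_contra h; exact hv (hS v h)
        have : ¬ T.Adj w v := fun h => T.irrefl (v := w) (hvw ▸ h)
        simp [hy0 v hv, this]
    rw [Finset.sum_congr rfl fun v _ => hterm v, Finset.sum_sub_distrib, ← Finset.mul_sum,
      ← Finset.mul_sum]
    rfl
  have hQeval : Q = lam * (∑ v, y v * x v) := by
    rw [hQ, Finset.mul_sum]
    refine Finset.sum_congr rfl fun v _ => ?_
    by_cases hv : v ∈ S
    · have h4 : (∑ u, if T.Adj v u ∧ v ∈ S ∧ u ∈ S then y u else 0)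
          = ∑ u, if T.Adj v u ∧ u ∈ S then y u else 0 := by
        refine Finset.sum_congr rfl fun u _ => ?_
        by_cases h : T.Adj v u ∧ u ∈ S
        · rw [if_pos h, if_pos ⟨h.1, hv, h.2⟩]
        · rw [if_neg h, if_neg (fun hc => h ⟨hc.1, hc.2.2⟩)]
      rw [h4, hyeq v hv]
      ring
    · have h4 : (∑ u, if T.Adj v u ∧ v ∈ S ∧ u ∈ S then y u else 0) = 0 :=
        Finset.sum_eq_zero fun u _ => if_neg (fun hc => hv hc.2.1)
      rw [h4, hy0 v hv]
      ring
  have : x w * nbrSum T w y = 0 := by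
    have := hPeval ▸ hQeval ▸ hPQ
    linarith
  rcases mul_eq_zero.mp this with h | h
  · exact h
  · exact absurd h hfy

end Delete

section Delete2
variable {V : Type*} [Fintype V] (T : SimpleGraph V) (lam : ℝ)

lemma nbrSum_apply (w : V) (y : V → ℝ) :
    nbrSum T w y = ∑ v, if T.Adj w v then y v else 0 := rfl

lemma finrank_ES_delete (w : V) (S : Set V) (hw : w ∉ S) (hS : ∀ v : V, v ≠ w → v ∈ S)
    (hex : ∃ y ∈ ES T lam S, nbrSum T w y ≠ 0) :
    Module.finrank ℝ (ES T lam Set.univ) + 1 = Module.finrank ℝ (ES T lam S) := by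
  obtain ⟨y₀, hy₀, hfy₀⟩ := hex
  -- membership characterization
  have mem1 : ∀ x : V → ℝ, x ∈ ES T lam Set.univ → x ∈ ES T lam S ∧ nbrSum T w x = 0 := by
    intro x hx
    have hxw : x w = 0 := eigvec_zero_at_w T lam w S hw hS y₀ hy₀ hfy₀ x hx
    obtain ⟨-, hxeq⟩ := hx
    have hxeq' : ∀ v, (∑ u, if T.Adj v u then x u else 0) = lam * x v := by
      intro v
      refine Eq.trans (Finset.sum_congr rfl fun u _ => ?_) (hxeq v (Set.mem_univ v))
      by_cases h : T.Adj v u <;> simp [h]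
    have hfx : nbrSum T w x = 0 := by
      rw [nbrSum_apply]
      have h1 := hxeq' w
      rw [hxw, mul_zero] at h1
      refine Eq.trans (Finset.sum_congr rfl fun u _ => ?_) h1
      by_cases h : T.Adj w u <;> simp [h]
    refine ⟨⟨fun v hv => ?_, fun v hv => ?_⟩, hfx⟩
    · have : v = w := by by_contra h; exact hv (hS v h)
      exact this ▸ hxw
    · rw [← hxeq' v]
      refine Finset.sum_congr rfl fun u _ => ?_
      by_cases ha : T.Adj v u
      · by_cases hu : u ∈ S
        · simp [ha, hu]
        · have huw : u = w := by by_contra h; exact hu (hS u h)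
          subst huw
          simp [ha, hu, hxw]
      · simp [ha]
  have mem2 : ∀ x : V → ℝ, x ∈ ES T lam S → nbrSum T w x = 0 → x ∈ ES T lam Set.univ := by
    rintro x ⟨hx0, hxeq⟩ hfx
    have hxw : x w = 0 := hx0 w hw
    refine ⟨fun v hv => absurd (Set.mem_univ v) hv, fun v _ => ?_⟩
    by_cases hv : v ∈ S
    · rw [← hxeq v hv]
      refine Finset.sum_congr rfl fun u _ => ?_
      by_cases ha : T.Adj v u
      · by_cases hu : u ∈ S
        · simp [ha, hu]
        · have huw : u = w := by by_contra h; exact hu (hS u h)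
          subst huw
          simp [ha, hu, hxw]
      · simp [ha]
    · have hvw : v = w := by by_contra h; exact hv (hS v h)
      subst hvw
      rw [hxw, mul_zero]
      have h5 : (∑ u, if T.Adj v u then x u else 0) = 0 := by
        rw [← nbrSum_apply]; exact hfx
      refine Eq.trans (Finset.sum_congr rfl fun u _ => ?_) h5
      by_cases h : T.Adj v u <;> simp [h]
  -- the restricted functional
  set F : ES T lam S →ₗ[ℝ] ℝ := (nbrSum T w).comp (ES T lam S).subtype with hF
  have hFy₀ : F ⟨y₀, hy₀⟩ = nbrSum T w y₀ := rfl
  have hFsurj : Function.Surjective F := by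
    intro c
    refine ⟨(c / nbrSum T w y₀) • ⟨y₀, hy₀⟩, ?_⟩
    rw [map_smul, hFy₀, smul_eq_mul, div_mul_cancel₀ c hfy₀]
  -- ES univ ≃ ker F
  let e : ES T lam Set.univ →ₗ[ℝ] LinearMap.ker F :=
    { toFun := fun x => ⟨⟨(x : V → ℝ), (mem1 x x.2).1⟩, by
        exact LinearMap.mem_ker.mpr (mem1 x x.2).2⟩
      map_add' := by intro a b; apply Subtype.ext; apply Subtype.ext; rfl
      map_smul' := by intro a b; apply Subtype.ext; apply Subtype.ext; rfl }
  have hebij : Function.Bijective e := by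
    constructor
    · intro a b h
      apply Subtype.ext
      exact congrArg (Subtype.val ∘ Subtype.val) h
    · rintro ⟨⟨x, hxS⟩, hxker⟩
      have : nbrSum T w x = 0 := by simpa [hF, LinearMap.mem_ker] using hxker
      exact ⟨⟨x, mem2 x hxS this⟩, by apply Subtype.ext; apply Subtype.ext; rfl⟩
  have h1 : Module.finrank ℝ (ES T lam Set.univ) = Module.finrank ℝ (LinearMap.ker F) :=
    LinearEquiv.finrank_eq (LinearEquiv.ofBijective e hebij)
  have h2 := LinearMap.finrank_range_add_finrank_ker F
  have h3 : LinearMap.range F = ⊤ := LinearMap.range_eq_top.mpr hFsurj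
  rw [h3] at h2
  have h4 : Module.finrank ℝ (⊤ : Submodule ℝ ℝ) = 1 := by
    rw [finrank_top]
    exact Module.finrank_self ℝ
  rw [h4] at h2
  rw [h1]
  omega

lemma exists_nonzero_at (S : Set V) (u : V) (hu : u ∈ S)
    (h1 : Module.finrank ℝ (ES T lam S) = 1)
    (h0 : Module.finrank ℝ (ES T lam (S \ {u})) = 0) :
    ∃ y ∈ ES T lam S, y u ≠ 0 := by
  have : ∃ y : ES T lam S, y ≠ 0 :=
    Module.finrank_pos_iff_exists_ne_zero.mp (h1 ▸ Nat.one_pos)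
  obtain ⟨⟨y, hy⟩, hyne⟩ := this
  refine ⟨y, hy, fun hyu => ?_⟩
  have hbot : ES T lam (S \ {u}) = ⊥ := Submodule.finrank_eq_zero.mp h0
  have hymem : y ∈ ES T lam (S \ {u}) := by
    obtain ⟨hy0, hyeq⟩ := hy
    constructor
    · intro v hv
      by_cases hvS : v ∈ S
      · have : v = u := by
          by_contra h
          exact hv ⟨hvS, h⟩
        exact this ▸ hyu
      · exact hy0 v hvS
    · rintro v ⟨hvS, hvu⟩
      rw [← hyeq v hvS]
      refine Finset.sum_congr rfl fun u' _ => ?_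
      by_cases ha : T.Adj v u'
      · by_cases hu' : u' ∈ S
        · by_cases he : u' = u
          · subst he
            simp [ha, hu', hyu]
          · simp [ha, hu', he, Set.mem_diff]
        · simp [ha, hu', Set.mem_diff]
      · simp [ha]
  rw [hbot, Submodule.mem_bot] at hymem
  exact hyne (Subtype.ext hymem)

end Delete2

section Tree
variable {V : Type*} [Fintype V] (T : SimpleGraph V) (w : V)

lemma exists_adj_in_comp (hconn : T.Connected)
    (c : (T.induce {u | u ≠ w}).ConnectedComponent) :
    ∃ u ∈ compSupp T w c, T.Adj w u := by
  obtain ⟨⟨v₀, hv₀⟩, hc⟩ := c.exists_rep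
  have aux : ∀ (v v' : V) (p : T.Walk v v'), v' = w → ∀ (hv : v ≠ w), ∃ (u : V) (hu : u ≠ w),
      T.Adj w u ∧ (T.induce {x | x ≠ w}).Reachable ⟨v, hv⟩ ⟨u, hu⟩ := by
    intro v v' p
    induction p with
    | nil => intro he hv; exact absurd he hv
    | @cons a b' c' h q ih =>
      intro he hv
      by_cases hb : b' = w
      · subst hb
        subst he
        exact ⟨a, hv, h.symm, SimpleGraph.Reachable.refl _⟩
      · obtain ⟨u, hu, hadj, hr⟩ := ih he hb
        have hab : (T.induce {x | x ≠ w}).Adj ⟨a, hv⟩ ⟨b', hb⟩ := by simpa using h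
        exact ⟨u, hu, hadj, hab.reachable.trans hr⟩
  obtain ⟨u, hu, hadj, hr⟩ := aux v₀ w ((hconn.preconnected v₀ w).some) rfl hv₀
  refine ⟨u, ?_, hadj⟩
  rw [mem_compSupp_iff T w hu, ← hc]
  exact (SimpleGraph.ConnectedComponent.sound hr.symm)

lemma unique_adj_in_comp (hT : T.IsTree)
    {c : (T.induce {u | u ≠ w}).ConnectedComponent} {u₁ u₂ : V}
    (h1 : u₁ ∈ compSupp T w c) (h2 : u₂ ∈ compSupp T w c)
    (ha1 : T.Adj w u₁) (ha2 : T.Adj w u₂) : u₁ = u₂ := by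
  classical
  have hu1 : u₁ ≠ w := ha1.ne'
  have hu2 : u₂ ≠ w := ha2.ne'
  rw [mem_compSupp_iff T w hu1] at h1
  rw [mem_compSupp_iff T w hu2] at h2
  have hr : (T.induce {u | u ≠ w}).Reachable ⟨u₁, hu1⟩ ⟨u₂, hu2⟩ := by
    rw [← SimpleGraph.ConnectedComponent.eq, h1, h2]
  obtain ⟨q0⟩ := hr
  set p : (T.induce {u | u ≠ w}).Walk ⟨u₁, hu1⟩ ⟨u₂, hu2⟩ := q0.toPath.1
  have hppath : p.IsPath := q0.toPath.2
  let emb : T.induce {u | u ≠ w} ↪g T := SimpleGraph.Embedding.induce {u | u ≠ w}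
  let pmap : T.Walk u₁ u₂ := p.map emb.toHom
  have hpmap : pmap.IsPath := SimpleGraph.Walk.map_isPath_of_injective emb.injective hppath
  have hwns : w ∉ pmap.support := by
    intro hmem
    rw [show pmap.support = p.support.map emb.toHom from
      SimpleGraph.Walk.support_map (f := emb.toHom) (p := p), List.mem_map] at hmem
    obtain ⟨a, _, ha⟩ := hmem
    exact a.2 ha
  -- two paths from u₁ to w
  have hP1 : (pmap.concat ha2.symm).IsPath := by
    rw [← SimpleGraph.Walk.isPath_reverse_iff, SimpleGraph.Walk.reverse_concat,
      SimpleGraph.Walk.cons_isPath_iff]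
    refine ⟨(SimpleGraph.Walk.isPath_reverse_iff pmap).mpr hpmap, ?_⟩
    rwa [SimpleGraph.Walk.support_reverse, List.mem_reverse]
  have hP2 : (SimpleGraph.Walk.cons ha1.symm SimpleGraph.Walk.nil).IsPath := by
    rw [SimpleGraph.Walk.cons_isPath_iff]
    exact ⟨SimpleGraph.Walk.IsPath.nil, by simp [hu1]⟩
  have huniq := hT.existsUnique_path u₁ w
  have heq : pmap.concat ha2.symm = SimpleGraph.Walk.cons ha1.symm SimpleGraph.Walk.nil :=
    (huniq.unique hP1 hP2)
  have hlen := congrArg SimpleGraph.Walk.length heq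
  rw [SimpleGraph.Walk.length_concat] at hlen
  simp only [SimpleGraph.Walk.length_cons, SimpleGraph.Walk.length_nil] at hlen
  have : pmap.length = 0 := by omega
  exact SimpleGraph.Walk.eq_of_length_eq_zero this

end Tree

section PathDeg
variable {V : Type*} [Fintype V] (T : SimpleGraph V)

lemma pathGraph_deg (n : ℕ) (i : Fin n) :
    deg (SimpleGraph.pathGraph n) i
      = (if i.1 + 1 < n then 1 else 0) + (if 0 < i.1 then 1 else 0) := by
  classical
  unfold deg
  have hset : (SimpleGraph.pathGraph n).neighborSet i
      = {j : Fin n | j.1 = i.1 + 1} ∪ {j : Fin n | j.1 + 1 = i.1} := by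
    ext j
    simp only [SimpleGraph.mem_neighborSet, SimpleGraph.pathGraph_adj, Set.mem_union,
      Set.mem_setOf_eq]
    omega
  rw [hset, Set.ncard_union_eq ?disj (Set.toFinite _) (Set.toFinite _)]
  case disj =>
    rw [Set.disjoint_left]
    rintro j h1 h2
    simp only [Set.mem_setOf_eq] at h1 h2
    omega
  have h1 : {j : Fin n | j.1 = i.1 + 1}.ncard = if i.1 + 1 < n then 1 else 0 := by
    by_cases h : i.1 + 1 < n
    · rw [if_pos h, show {j : Fin n | j.1 = i.1 + 1} = {⟨i.1 + 1, h⟩} from ?_,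
        Set.ncard_singleton]
      ext j
      simp [Fin.ext_iff]
    · rw [if_neg h, show {j : Fin n | j.1 = i.1 + 1} = (∅ : Set (Fin n)) from ?_,
        Set.ncard_empty]
      ext j
      simp only [Set.mem_setOf_eq, Set.mem_empty_iff_false, iff_false]
      have := j.isLt
      omega
  have h2 : {j : Fin n | j.1 + 1 = i.1}.ncard = if 0 < i.1 then 1 else 0 := by
    by_cases h : 0 < i.1
    · have hlt : i.1 - 1 < n := by have := i.isLt; omega
      rw [if_pos h, show {j : Fin n | j.1 + 1 = i.1} = {⟨i.1 - 1, hlt⟩} from ?_,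
        Set.ncard_singleton]
      ext j
      simp only [Set.mem_setOf_eq, Set.mem_singleton_iff, Fin.ext_iff]
      omega
    · rw [if_neg h, show {j : Fin n | j.1 + 1 = i.1} = (∅ : Set (Fin n)) from ?_,
        Set.ncard_empty]
      ext j
      simp only [Set.mem_setOf_eq, Set.mem_empty_iff_false, iff_false]
      omega
  rw [h1, h2]

lemma compDeg_eq_pathDeg {S : Set V} {v : V} (hv : v ∈ S) {n : ℕ}
    (e : (T.induce S) ≃g SimpleGraph.pathGraph n) :
    (T.neighborSet v ∩ S).ncard = deg (SimpleGraph.pathGraph n) (e ⟨v, hv⟩) := by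
  unfold deg
  rw [← Nat.card_coe_set_eq, ← Nat.card_coe_set_eq]
  refine Nat.card_congr (Equiv.trans ?_ (e.mapNeighborSet ⟨v, hv⟩))
  exact {
    toFun := fun u => ⟨⟨u.1, u.2.2⟩, by
      have : T.Adj v u.1 := u.2.1
      simpa using this⟩
    invFun := fun a => ⟨a.1.1, by
      have : (T.induce S).Adj ⟨v, hv⟩ a.1 := a.2
      simpa using this, a.1.2⟩
    left_inv := fun u => rfl
    right_inv := fun a => Subtype.ext (Subtype.ext rfl) }

end PathDeg

section DegSplit
variable {V : Type*} [Fintype V] (T : SimpleGraph V) (w : V)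

lemma deg_split {c : (T.induce {u | u ≠ w}).ConnectedComponent} {v : V}
    (hv : v ∈ compSupp T w c) :
    deg T v = (T.neighborSet v ∩ compSupp T w c).ncard + (if T.Adj v w then 1 else 0) := by
  classical
  have hvw : v ≠ w := compSupp_subset_s14 T w c hv
  have hsplit : T.neighborSet v
      = (T.neighborSet v ∩ compSupp T w c) ∪ (T.neighborSet v ∩ {w}) := by
    ext u
    simp only [Set.mem_union, Set.mem_inter_iff, SimpleGraph.mem_neighborSet,
      Set.mem_singleton_iff]
    constructor
    · intro ha
      by_cases hu : u = w
      · exact Or.inr ⟨ha, hu⟩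
      · exact Or.inl ⟨ha, compSupp_closed_s14 T w hv ha hu⟩
    · rintro (⟨ha, -⟩ | ⟨ha, -⟩) <;> exact ha
  have hdisj : Disjoint (T.neighborSet v ∩ compSupp T w c) (T.neighborSet v ∩ {w}) := by
    rw [Set.disjoint_left]
    rintro u ⟨-, hu1⟩ ⟨-, hu2⟩
    rw [Set.mem_singleton_iff] at hu2
    exact compSupp_subset_s14 T w c hu1 hu2
  have hsing : (T.neighborSet v ∩ {w}).ncard = if T.Adj v w then 1 else 0 := by
    by_cases h : T.Adj v w
    · rw [if_pos h, show T.neighborSet v ∩ {w} = {w} from ?_, Set.ncard_singleton]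
      ext u
      simp only [Set.mem_inter_iff, SimpleGraph.mem_neighborSet, Set.mem_singleton_iff]
      exact ⟨fun h' => h'.2, fun h' => ⟨h' ▸ h, h'⟩⟩
    · rw [if_neg h, show T.neighborSet v ∩ {w} = (∅ : Set V) from ?_, Set.ncard_empty]
      ext u
      simp only [Set.mem_inter_iff, SimpleGraph.mem_neighborSet, Set.mem_singleton_iff,
        Set.mem_empty_iff_false, iff_false, not_and]
      rintro ha rfl
      exact h ha
  unfold deg
  conv_lhs => rw [hsplit]
  rw [Set.ncard_union_eq hdisj (Set.toFinite _) (Set.toFinite _), hsing]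

lemma card_components (hT : T.IsTree)
    [Fintype (T.induce {u | u ≠ w}).ConnectedComponent] :
    Fintype.card (T.induce {u | u ≠ w}).ConnectedComponent = deg T w := by
  classical
  have hbij : Function.Bijective (fun u : T.neighborSet w =>
      (T.induce {u | u ≠ w}).connectedComponentMk ⟨u.1, (u.2 : T.Adj w u.1).ne'⟩) := by
    constructor
    · rintro ⟨u₁, ha1⟩ ⟨u₂, ha2⟩ h
      simp only at h
      have m1 : u₁ ∈ compSupp T w ((T.induce {u | u ≠ w}).connectedComponentMk
          ⟨u₁, (ha1 : T.Adj w u₁).ne'⟩) := mem_compSupp_self T w _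
      have m2 : u₂ ∈ compSupp T w ((T.induce {u | u ≠ w}).connectedComponentMk
          ⟨u₁, (ha1 : T.Adj w u₁).ne'⟩) := by
        rw [h]; exact mem_compSupp_self T w _
      exact Subtype.ext (unique_adj_in_comp T w hT m1 m2 ha1 ha2)
    · intro c
      obtain ⟨u, hu, hadj⟩ := exists_adj_in_comp T w hT.1 c
      refine ⟨⟨u, hadj⟩, ?_⟩
      simp only
      rwa [← mem_compSupp_iff T w (hadj.ne')]
  calc Fintype.card (T.induce {u | u ≠ w}).ConnectedComponent
      = Nat.card (T.induce {u | u ≠ w}).ConnectedComponent := Nat.card_eq_fintype_card.symm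
    _ = Nat.card (T.neighborSet w) := (Nat.card_congr (Equiv.ofBijective _ hbij)).symm
    _ = (T.neighborSet w).ncard := Nat.card_coe_set_eq _
    _ = deg T w := rfl

end DegSplit

section CompPend
variable {V : Type*} [Fintype V] (T : SimpleGraph V) (w : V)

lemma comp_pend_count (hT : T.IsTree) (c : (T.induce {u | u ≠ w}).ConnectedComponent)
    (hpath : IsPathGraph (T.induce (compSupp T w c)))
    (hend : ∀ v ∈ compSupp T w c, T.Adj w v →
      (T.neighborSet v ∩ compSupp T w c).ncard ≤ 1) :
    {v | v ∈ compSupp T w c ∧ deg T v = 1}.ncard = 1 := by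
  classical
  obtain ⟨n, ⟨e⟩⟩ := hpath
  obtain ⟨u, hu, hadj⟩ := exists_adj_in_comp T w hT.1 c
  set i₀ : Fin n := e ⟨u, hu⟩ with hi₀
  have hn : 0 < n := by have := i₀.isLt; omega
  have hcond : ∀ (v : V) (hv : v ∈ compSupp T w c), (e ⟨v, hv⟩ = i₀ ↔ v = u) := by
    intro v hv
    constructor
    · intro h
      have h2 : (⟨v, hv⟩ : compSupp T w c) = ⟨u, hu⟩ := e.toEquiv.injective h
      exact congrArg Subtype.val h2
    · rintro rfl
      rfl
  have hdeg : ∀ (v : V) (hv : v ∈ compSupp T w c),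
      deg T v = deg (SimpleGraph.pathGraph n) (e ⟨v, hv⟩) + (if v = u then 1 else 0) := by
    intro v hv
    rw [deg_split T w hv, compDeg_eq_pathDeg T hv e]
    congr 1
    by_cases h : v = u
    · subst h
      simp [hadj.symm]
    · have hnadj : ¬ T.Adj v w := fun ha =>
        h (unique_adj_in_comp T w hT hv hu ha.symm hadj)
      simp [hnadj, h]
  -- transfer the count to Fin n
  set B : Set (Fin n) :=
    {i | deg (SimpleGraph.pathGraph n) i + (if i = i₀ then 1 else 0) = 1} with hB
  have htrans : {v | v ∈ compSupp T w c ∧ deg T v = 1}.ncard = B.ncard := by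
    set f : V → Fin n := fun v => if h : v ∈ compSupp T w c then e ⟨v, h⟩ else i₀ with hf
    have hinj : Set.InjOn f {v | v ∈ compSupp T w c ∧ deg T v = 1} := by
      rintro a ⟨ha, -⟩ b ⟨hb, -⟩ hab
      rw [hf] at hab
      simp only [dif_pos ha, dif_pos hb] at hab
      exact congrArg Subtype.val (e.toEquiv.injective hab)
    have himg : f '' {v | v ∈ compSupp T w c ∧ deg T v = 1} = B := by
      ext i
      constructor
      · rintro ⟨v, ⟨hvs, hvd⟩, rfl⟩
        rw [hf]
        simp only [dif_pos hvs, hB, Set.mem_setOf_eq]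
        rw [hdeg v hvs] at hvd
        have hite : (if e ⟨v, hvs⟩ = i₀ then (1:ℕ) else 0) = (if v = u then 1 else 0) := by
          by_cases h : v = u
          · rw [if_pos ((hcond v hvs).mpr h), if_pos h]
          · rw [if_neg (fun hc => h ((hcond v hvs).mp hc)), if_neg h]
        rw [hite]
        exact hvd
      · intro hi
        refine ⟨(e.symm i).1, ⟨(e.symm i).2, ?_⟩, ?_⟩
        · rw [hdeg (e.symm i).1 (e.symm i).2]
          have he : e ⟨(e.symm i).1, (e.symm i).2⟩ = i := by
            have : (⟨(e.symm i).1, (e.symm i).2⟩ : compSupp T w c) = e.symm i := rfl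
            rw [this]
            exact e.apply_symm_apply i
          rw [he]
          rw [hB, Set.mem_setOf_eq] at hi
          have hite : (if (e.symm i).1 = u then (1:ℕ) else 0) = (if i = i₀ then 1 else 0) := by
            by_cases h : (e.symm i).1 = u
            · rw [if_pos h, if_pos (by rw [← he]; exact (hcond _ (e.symm i).2).mpr h)]
            · rw [if_neg h, if_neg (fun hc => h ((hcond _ (e.symm i).2).mp (he.trans hc)))]
          rw [hite]
          exact hi
        · rw [hf]
          simp only [dif_pos (e.symm i).2]
          have : (⟨(e.symm i).1, (e.symm i).2⟩ : compSupp T w c) = e.symm i := rfl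
          rw [this]
          exact e.apply_symm_apply i
    rw [← himg, Set.ncard_image_of_injOn hinj]
  rw [htrans]
  -- the path-degree of the attachment vertex is at most 1
  have hdu : deg (SimpleGraph.pathGraph n) i₀ ≤ 1 := by
    have h := hend u hu hadj.symm.symm
    rwa [compDeg_eq_pathDeg T hu e] at h
  rcases Nat.lt_or_ge n 2 with hn2 | hn2
  · -- n = 1
    have hn1 : n = 1 := by omega
    subst hn1
    have hB1 : B = {i₀} := by
      ext i
      have hii : i = i₀ := by
        apply Fin.ext
        have h1 := i.isLt
        have h2 := i₀.isLt
        omega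
      subst hii
      simp only [hB, Set.mem_setOf_eq, Set.mem_singleton_iff, if_pos rfl, pathGraph_deg]
      norm_num
    rw [hB1, Set.ncard_singleton]
  · -- n ≥ 2
    set A0 : Fin n := ⟨0, by omega⟩ with hA0
    set B0 : Fin n := ⟨n - 1, by omega⟩ with hB0
    have hAB0 : A0 ≠ B0 := by
      rw [hA0, hB0, Ne, Fin.ext_iff]
      simp only
      omega
    have hdegA0 : deg (SimpleGraph.pathGraph n) A0 = 1 := by
      rw [pathGraph_deg, hA0]
      simp only
      rw [if_pos (by omega : 0 + 1 < n), if_neg (by omega : ¬ (0:ℕ) > 0)]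
    have hdegB0 : deg (SimpleGraph.pathGraph n) B0 = 1 := by
      rw [pathGraph_deg, hB0]
      simp only
      rw [if_neg (by omega : ¬ (n - 1 + 1 < n)), if_pos (by omega : 0 < n - 1)]
    have hdeg2 : ∀ i : Fin n, i ≠ A0 → i ≠ B0 → deg (SimpleGraph.pathGraph n) i = 2 := by
      intro i h1 h2
      rw [Ne, Fin.ext_iff] at h1 h2
      have hi := i.isLt
      rw [pathGraph_deg, if_pos (by simp only [hA0, hB0] at h1 h2; omega),
        if_pos (by simp only [hA0, hB0] at h1 h2; omega)]
    have hi₀AB : i₀ = A0 ∨ i₀ = B0 := by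
      by_contra h
      push_neg at h
      rw [hdeg2 i₀ h.1 h.2] at hdu
      omega
    set j₀ : Fin n := if i₀ = A0 then B0 else A0 with hj₀
    have hj₀ne : j₀ ≠ i₀ := by
      rcases hi₀AB with h | h
      · rw [hj₀, if_pos h, h]; exact hAB0.symm
      · have hne : i₀ ≠ A0 := fun hc => hAB0 (by rw [← hc, h])
        rw [hj₀, if_neg hne, h]; exact hAB0
    have hdegj₀ : deg (SimpleGraph.pathGraph n) j₀ = 1 := by
      rw [hj₀]
      by_cases h : i₀ = A0
      · rw [if_pos h]; exact hdegB0
      · rw [if_neg h]; exact hdegA0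
    have hBj : B = {j₀} := by
      ext i
      simp only [hB, Set.mem_setOf_eq, Set.mem_singleton_iff]
      constructor
      · intro h
        by_cases hii : i = i₀
        · exfalso
          rw [if_pos hii] at h
          have hd0 : deg (SimpleGraph.pathGraph n) i = 0 := by omega
          by_cases hA : i = A0
          · rw [hA, hdegA0] at hd0; omega
          · by_cases hBc : i = B0
            · rw [hBc, hdegB0] at hd0; omega
            · rw [hdeg2 i hA hBc] at hd0; omega
        · rw [if_neg hii, add_zero] at h
          by_cases hA : i = A0
          · subst hA
            rw [hj₀]
            rcases hi₀AB with h' | h'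
            · exact absurd h'.symm hii
            · have hne : i₀ ≠ A0 := fun hc => hAB0 (by rw [← hc, h'])
              rw [if_neg hne]
          · by_cases hBc : i = B0
            · subst hBc
              rw [hj₀]
              rcases hi₀AB with h' | h'
              · rw [if_pos h']
              · exact absurd h'.symm hii
            · rw [hdeg2 i hA hBc] at h; omega
      · rintro rfl
        rw [if_neg hj₀ne, add_zero]
        exact hdegj₀
    rw [hBj, Set.ncard_singleton]

end CompPend

section Final
variable {V : Type*} [Fintype V] (T : SimpleGraph V) (lam : ℝ) (w : V)

lemma pendCount_eq (hT : T.IsTree) (hw4 : 4 ≤ deg T w)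
    [Fintype (T.induce {u | u ≠ w}).ConnectedComponent]
    (hpaths : ∀ c : (T.induce {u | u ≠ w}).ConnectedComponent,
      IsPathGraph (T.induce (compSupp T w c)) ∧
      ∀ v ∈ compSupp T w c, T.Adj w v →
        (T.neighborSet v ∩ compSupp T w c).ncard ≤ 1) :
    pendCount T = deg T w := by
  classical
  have hperc : ∀ c : (T.induce {u | u ≠ w}).ConnectedComponent,
      (Finset.univ.filter (fun v => v ∈ compSupp T w c ∧ deg T v = 1)).card = 1 := by
    intro c
    have h2 : (Finset.univ.filter (fun v => v ∈ compSupp T w c ∧ deg T v = 1)).card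
        = {v | v ∈ compSupp T w c ∧ deg T v = 1}.ncard := by
      rw [← Set.ncard_coe_finset]
      congr 1
      ext v
      simp
    rw [h2]
    exact comp_pend_count T w hT c (hpaths c).1 (hpaths c).2
  have hPF : pendCount T = (Finset.univ.filter (fun v => deg T v = 1)).card := by
    rw [pendCount, ← Set.ncard_coe_finset]
    congr 1
    ext v
    simp
  have hpart : (Finset.univ.filter (fun v => deg T v = 1))
      = Finset.univ.biUnion (fun c : (T.induce {u | u ≠ w}).ConnectedComponent =>
          Finset.univ.filter (fun v => v ∈ compSupp T w c ∧ deg T v = 1)) := by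
    ext v
    simp only [Finset.mem_filter, Finset.mem_univ, true_and, Finset.mem_biUnion]
    constructor
    · intro hd
      have hvw : v ≠ w := by
        rintro rfl
        omega
      exact ⟨_, mem_compSupp_self T w hvw, hd⟩
    · rintro ⟨c, -, hd⟩
      exact hd
  have hdisj : ∀ c ∈ Finset.univ, ∀ c' ∈ Finset.univ, c ≠ c' →
      Disjoint (Finset.univ.filter (fun v => v ∈ compSupp T w c ∧ deg T v = 1))
        (Finset.univ.filter (fun v => v ∈ compSupp T w c' ∧ deg T v = 1)) := by
    intro c _ c' _ hcc
    rw [Finset.disjoint_left]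
    rintro v hv1 hv2
    rw [Finset.mem_filter] at hv1 hv2
    exact compSupp_disjoint T w hcc hv1.2.1 hv2.2.1
  rw [hPF, hpart, Finset.card_biUnion hdisj]
  rw [Finset.sum_congr rfl (fun c _ => hperc c)]
  rw [Finset.sum_const, smul_eq_mul, mul_one, ← Fintype.card, card_components T w hT]

lemma gMult_eq (hT : T.IsTree) (hw4 : 4 ≤ deg T w)
    [Fintype (T.induce {u | u ≠ w}).ConnectedComponent]
    (hone : ∃ c₁ : (T.induce {u | u ≠ w}).ConnectedComponent,
      sMult T (compSupp T w c₁) lam = 0 ∧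
      ∀ c ≠ c₁, sMult T (compSupp T w c) lam = 1 ∧
        ∃ u ∈ compSupp T w c, T.Adj w u ∧
          sMult T (compSupp T w c \ {u}) lam = 0) :
    gMult T lam + 2 = deg T w := by
  classical
  obtain ⟨c₁, hc₁0, hrest⟩ := hone
  -- the rank over the deleted graph
  have hWsum : Module.finrank ℝ (ES T lam {u | u ≠ w})
      = ∑ c : (T.induce {u | u ≠ w}).ConnectedComponent,
          Module.finrank ℝ (ES T lam (compSupp T w c)) := finrank_ES_decomp T lam w
  have hvals : ∀ c : (T.induce {u | u ≠ w}).ConnectedComponent,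
      Module.finrank ℝ (ES T lam (compSupp T w c)) = if c = c₁ then 0 else 1 := by
    intro c
    by_cases h : c = c₁
    · rw [if_pos h, h, ← sMult_eq_finrank_ES]
      exact hc₁0
    · rw [if_neg h, ← sMult_eq_finrank_ES]
      exact (hrest c h).1
  have hcard : Fintype.card (T.induce {u | u ≠ w}).ConnectedComponent = deg T w :=
    card_components T w hT
  have hWval : Module.finrank ℝ (ES T lam {u | u ≠ w}) + 1 = deg T w := by
    rw [hWsum, Finset.sum_congr rfl (fun c _ => hvals c), ← hcard]
    have h2 : (∑ c : (T.induce {u | u ≠ w}).ConnectedComponent,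
        ((if c = c₁ then 0 else 1) + (if c = c₁ then 1 else 0)))
        = Fintype.card (T.induce {u | u ≠ w}).ConnectedComponent := by
      rw [show (Fintype.card (T.induce {u | u ≠ w}).ConnectedComponent)
        = ∑ _c : (T.induce {u | u ≠ w}).ConnectedComponent, 1 from by
          rw [Finset.sum_const, smul_eq_mul, mul_one, Fintype.card]]
      refine Finset.sum_congr rfl fun c _ => ?_
      by_cases h : c = c₁ <;> simp [h]
    rw [Finset.sum_add_distrib, Finset.sum_ite_eq' Finset.univ c₁ (fun _ => 1),
      if_pos (Finset.mem_univ c₁)] at h2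
    exact h2
  -- witness component
  have hex2 : ∃ c₂ : (T.induce {u | u ≠ w}).ConnectedComponent, c₂ ≠ c₁ := by
    have : 1 < Fintype.card (T.induce {u | u ≠ w}).ConnectedComponent := by omega
    exact Fintype.exists_ne_of_one_lt_card this c₁
  obtain ⟨c₂, hc₂⟩ := hex2
  obtain ⟨h1, u, hus, hadj, h0⟩ := hrest c₂ hc₂
  rw [sMult_eq_finrank_ES] at h1 h0
  obtain ⟨y, hyS, hyu⟩ := exists_nonzero_at T lam (compSupp T w c₂) u hus h1 h0
  have hyW : y ∈ ES T lam {u | u ≠ w} := by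
    refine ES_mono_closed T lam (compSupp_subset_s14 T w c₂) ?_ hyS
    intro v hv u' hu' ha
    exact compSupp_closed_s14 T w hv ha hu'
  have hfy : nbrSum T w y ≠ 0 := by
    have heq : nbrSum T w y = y u := by
      rw [nbrSum_apply, Finset.sum_eq_single_of_mem u (Finset.mem_univ u)]
      · rw [if_pos hadj]
      · intro b _ hb
        by_cases hba : T.Adj w b
        · rw [if_pos hba]
          by_cases hbs : b ∈ compSupp T w c₂
          · exact absurd (unique_adj_in_comp T w hT hbs hus hba hadj) hb
          · exact hyS.1 b hbs
        · rw [if_neg hba]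
    rw [heq]
    exact hyu
  have hdel := finrank_ES_delete T lam w {u | u ≠ w} (fun h => h rfl) (fun v hv => hv)
    ⟨y, hyW, hfy⟩
  rw [gMult_eq_finrank_ES T lam]
  omega

end Final

/-- Base case `γ(T) = 1` of the 'if' direction of Theorem 1.4. -/
theorem stmt14 (i m : ℕ) (hi1 : 1 ≤ i) (him : i ≤ m) (hco : Nat.Coprime i (m + 1))
    (lam : ℝ) (hlam : lam = 2 * Real.cos (i * Real.pi / (m + 1)))
    {V : Type*} [Fintype V] (T : SimpleGraph V) (hT : T.IsTree)
    (w : V) (hw : 4 ≤ deg T w) (huniq : ∀ u : V, 3 ≤ deg T u → u = w)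
    (hpaths : ∀ c : (T.induce {u | u ≠ w}).ConnectedComponent,
      IsPathGraph (T.induce (compSupp T w c)) ∧
      ∀ v ∈ compSupp T w c, T.Adj w v →
        (T.neighborSet v ∩ compSupp T w c).ncard ≤ 1)
    (hone : ∃ c₁ : (T.induce {u | u ≠ w}).ConnectedComponent,
      sMult T (compSupp T w c₁) lam = 0 ∧
      ∀ c ≠ c₁, sMult T (compSupp T w c) lam = 1 ∧
        ∃ u ∈ compSupp T w c, T.Adj w u ∧
          sMult T (compSupp T w c \ {u}) lam = 0) :
    gMult T lam + 2 = deg T w ∧ pendCount T = deg T w := by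
  classical
  haveI : Fintype (T.induce {u | u ≠ w}).ConnectedComponent := Fintype.ofFinite _
  exact ⟨gMult_eq T lam w hT hw hone, pendCount_eq T w hT hw hpaths⟩
end
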